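/- CD+ does not prove the sentence (∀φ ∈ Sent(L_D))(TTφ ∨ TFφ → Dφ); that is, the converse of the CD+-provable implication Dφ → TTφ ∨ TFφ is unprovable in CD+. -/

import Mathlib

/- ------------------------------------------------------------------------
Self-contained framework formalizing the setting of Castaldo & Nicolai,
"On Classical Determinate Truth": the languages `L_ℕ ⊆ L_T ⊆ L_D` (with
finitely many function symbols for elementary syntactic operations and a
canonical Gödel numbering), the Fujimoto–Halbach theory `CD⁺`, its variants
`CD⁺↾`, `CD⁺↾cp`, `CD⁺↾sym` with a *defined* determinateness predicate, the
classical closures `CKF`, `CKFcp` of Kripke–Feferman truth, `KF + CONS` and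
`CT[KF + CONS]`, the Strong Kleene jump `𝒦` and its fixed-point semantics.

Provability `Proves` is rendered as semantic consequence over arbitrary
(Type-0) structures of the language, which by Gödel completeness and
downward Löwenheim–Skolem coincides with first-order derivability.  The
arithmetical base of all theories is rendered as the set of all true
arithmetical-syntactic sentences together with the induction schema for the
full language (induction for `T` and `D` as in the paper).
------------------------------------------------------------------------ -/

namespace CDT

attribute [local instance] Classical.propDecidable

/-- Terms of the arithmetical language `L_ℕ`, including function symbols for
the elementary syntactic operations on Gödel codes:
`num` (numeral function), `fneg`/`fand`/`fall`/`feq`/`fT`/`fD` (building codes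
of negations, conjunctions, universal quantifications, equations, `T`- and
`D`-ascriptions), `fsub` (formal substitution), `tneg` (term-level composition
with `fneg`, used for the falsity predicate `F`), `uall`/`uex` (codes of
`∀t Tφ(t)` and `∃t Fφ(t)`), and `evalt` (evaluation `t ↦ t°` of closed terms). -/
inductive Term : Type
  | var   : ℕ → Term
  | zero  : Term
  | succ  : Term → Term
  | add   : Term → Term → Term
  | mul   : Term → Term → Term
  | num   : Term → Term
  | fneg  : Term → Term
  | fand  : Term → Term → Term
  | fall  : Term → Term → Term
  | feq   : Term → Term → Term
  | fT    : Term → Term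
  | fD    : Term → Term
  | fsub  : Term → Term → Term → Term
  | tneg  : Term → Term
  | uall  : Term → Term → Term
  | uex   : Term → Term → Term
  | evalt : Term → Term
  deriving DecidableEq

/-- Formulas of the language `L_D = L_ℕ ∪ {T, D}` (together with the further
Tarskian truth predicate `Tb` = `𝐓` of `CT[KF+CONS]`, and with primitive
predicate symbols for the elementary syntactic guards `Cterm`, `Sent_{L_T}`,
`Sent_{L_D}`, `Fml¹_{L_T}`, `Fml¹_{L_D}`).  `L_T`-formulas are those without
`D` and `Tb`. -/
inductive Fml : Type
  | eq    : Term → Term → Fml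
  | T     : Term → Fml
  | D     : Term → Fml
  | Tb    : Term → Fml
  | ct    : Term → Fml
  | sentT : Term → Fml
  | sentD : Term → Fml
  | fml1T : Term → Term → Fml
  | fml1D : Term → Term → Fml
  | not   : Fml → Fml
  | and   : Fml → Fml → Fml
  | all   : ℕ → Fml → Fml
  deriving DecidableEq

/-- Defined connectives (classical). -/
def Fml.imp (A B : Fml) : Fml := (A.and B.not).not
def Fml.or (A B : Fml) : Fml := (A.not.and B.not).not
def Fml.iff (A B : Fml) : Fml := (A.imp B).and (B.imp A)
def Fml.ex (k : ℕ) (A : Fml) : Fml := (Fml.all k A.not).not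

/-- Free variables of a term. -/
def Term.fv : Term → Finset ℕ
  | .var n => {n}
  | .zero => ∅
  | .succ t => t.fv
  | .add s t => s.fv ∪ t.fv
  | .mul s t => s.fv ∪ t.fv
  | .num t => t.fv
  | .fneg t => t.fv
  | .fand s t => s.fv ∪ t.fv
  | .fall s t => s.fv ∪ t.fv
  | .feq s t => s.fv ∪ t.fv
  | .fT t => t.fv
  | .fD t => t.fv
  | .fsub e s k => e.fv ∪ s.fv ∪ k.fv
  | .tneg t => t.fv
  | .uall s t => s.fv ∪ t.fv
  | .uex s t => s.fv ∪ t.fv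
  | .evalt t => t.fv

/-- Free variables of a formula. -/
def Fml.fv : Fml → Finset ℕ
  | .eq s t => s.fv ∪ t.fv
  | .T t => t.fv
  | .D t => t.fv
  | .Tb t => t.fv
  | .ct t => t.fv
  | .sentT t => t.fv
  | .sentD t => t.fv
  | .fml1T s t => s.fv ∪ t.fv
  | .fml1D s t => s.fv ∪ t.fv
  | .not A => A.fv
  | .and A B => A.fv ∪ B.fv
  | .all k A => A.fv.erase k

/-- Substitution of a term for a variable in a term. -/
def Term.subst (k : ℕ) (s : Term) : Term → Term
  | .var n => if n = k then s else .var n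
  | .zero => .zero
  | .succ t => .succ (Term.subst k s t)
  | .add t u => .add (Term.subst k s t) (Term.subst k s u)
  | .mul t u => .mul (Term.subst k s t) (Term.subst k s u)
  | .num t => .num (Term.subst k s t)
  | .fneg t => .fneg (Term.subst k s t)
  | .fand t u => .fand (Term.subst k s t) (Term.subst k s u)
  | .fall t u => .fall (Term.subst k s t) (Term.subst k s u)
  | .feq t u => .feq (Term.subst k s t) (Term.subst k s u)
  | .fT t => .fT (Term.subst k s t)
  | .fD t => .fD (Term.subst k s t)
  | .fsub e t u => .fsub (Term.subst k s e) (Term.subst k s t) (Term.subst k s u)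
  | .tneg t => .tneg (Term.subst k s t)
  | .uall t u => .uall (Term.subst k s t) (Term.subst k s u)
  | .uex t u => .uex (Term.subst k s t) (Term.subst k s u)
  | .evalt t => .evalt (Term.subst k s t)

/-- Substitution of a (closed) term for a variable in a formula. -/
def Fml.subst (k : ℕ) (s : Term) : Fml → Fml
  | .eq t u => .eq (Term.subst k s t) (Term.subst k s u)
  | .T t => .T (Term.subst k s t)
  | .D t => .D (Term.subst k s t)
  | .Tb t => .Tb (Term.subst k s t)
  | .ct t => .ct (Term.subst k s t)
  | .sentT t => .sentT (Term.subst k s t)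
  | .sentD t => .sentD (Term.subst k s t)
  | .fml1T t u => .fml1T (Term.subst k s t) (Term.subst k s u)
  | .fml1D t u => .fml1D (Term.subst k s t) (Term.subst k s u)
  | .not A => (Fml.subst k s A).not
  | .and A B => (Fml.subst k s A).and (Fml.subst k s B)
  | .all m A => if m = k then .all m A else .all m (Fml.subst k s A)

/-- The formula contains no occurrence of the truth predicate `T`. -/
def Fml.noT : Fml → Prop
  | .T _ => False
  | .not A => A.noT
  | .and A B => A.noT ∧ B.noT
  | .all _ A => A.noT
  | _ => True

/-- The formula contains no occurrence of the determinateness predicate `D`. -/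
def Fml.noD : Fml → Prop
  | .D _ => False
  | .not A => A.noD
  | .and A B => A.noD ∧ B.noD
  | .all _ A => A.noD
  | _ => True

/-- The formula contains no occurrence of the Tarskian predicate `𝐓`. -/
def Fml.noTb : Fml → Prop
  | .Tb _ => False
  | .not A => A.noTb
  | .and A B => A.noTb ∧ B.noTb
  | .all _ A => A.noTb
  | _ => True

/-- `A` is a sentence of `L_T`. -/
def IsSentT (A : Fml) : Prop := A.noD ∧ A.noTb ∧ A.fv = ∅

/-- `A` is a sentence of `L_D`. -/
def IsSentD (A : Fml) : Prop := A.noTb ∧ A.fv = ∅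

/-- The numeral of a natural number. -/
def numeral : ℕ → Term
  | 0 => .zero
  | n + 1 => .succ (numeral n)

/-- The canonical Gödel numbering of terms (injective by construction,
via the Cantor pairing function). -/
def Term.code : Term → ℕ
  | .var n => Nat.pair 1 n
  | .zero => Nat.pair 2 0
  | .succ t => Nat.pair 3 t.code
  | .add s t => Nat.pair 4 (Nat.pair s.code t.code)
  | .mul s t => Nat.pair 5 (Nat.pair s.code t.code)
  | .num t => Nat.pair 6 t.code
  | .fneg t => Nat.pair 7 t.code
  | .fand s t => Nat.pair 8 (Nat.pair s.code t.code)
  | .fall s t => Nat.pair 9 (Nat.pair s.code t.code)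
  | .feq s t => Nat.pair 10 (Nat.pair s.code t.code)
  | .fT t => Nat.pair 11 t.code
  | .fD t => Nat.pair 12 t.code
  | .fsub e s k => Nat.pair 13 (Nat.pair e.code (Nat.pair s.code k.code))
  | .tneg t => Nat.pair 14 t.code
  | .uall s t => Nat.pair 15 (Nat.pair s.code t.code)
  | .uex s t => Nat.pair 16 (Nat.pair s.code t.code)
  | .evalt t => Nat.pair 17 t.code

/-- The canonical Gödel numbering of formulas. -/
def Fml.code : Fml → ℕ
  | .eq s t => Nat.pair 101 (Nat.pair s.code t.code)
  | .T t => Nat.pair 102 t.code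
  | .D t => Nat.pair 103 t.code
  | .Tb t => Nat.pair 104 t.code
  | .ct t => Nat.pair 105 t.code
  | .sentT t => Nat.pair 106 t.code
  | .sentD t => Nat.pair 107 t.code
  | .fml1T s t => Nat.pair 108 (Nat.pair s.code t.code)
  | .fml1D s t => Nat.pair 109 (Nat.pair s.code t.code)
  | .not A => Nat.pair 110 A.code
  | .and A B => Nat.pair 111 (Nat.pair A.code B.code)
  | .all k A => Nat.pair 112 (Nat.pair k A.code)

/-- Partial decoding of terms (the partial inverse of `Term.code`). -/
noncomputable def decT (n : ℕ) : Option Term :=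
  if h : ∃ t : Term, t.code = n then some h.choose else none

/-- Partial decoding of formulas. -/
noncomputable def decF (n : ℕ) : Option Fml :=
  if h : ∃ A : Fml, A.code = n then some h.choose else none

/-! The standard interpretations of the syntactic function symbols. -/

noncomputable def opNum (n : ℕ) : ℕ := (numeral n).code
noncomputable def opFneg (n : ℕ) : ℕ :=
  match decF n with | some A => A.not.code | none => 0
noncomputable def opFand (m n : ℕ) : ℕ :=
  match decF m, decF n with | some A, some B => (A.and B).code | _, _ => 0
noncomputable def opFall (k n : ℕ) : ℕ :=
  match decF n with | some A => (Fml.all k A).code | none => 0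
noncomputable def opFeq (m n : ℕ) : ℕ :=
  match decT m, decT n with | some s, some t => (Fml.eq s t).code | _, _ => 0
noncomputable def opFT (n : ℕ) : ℕ :=
  match decT n with | some t => (Fml.T t).code | none => 0
noncomputable def opFD (n : ℕ) : ℕ :=
  match decT n with | some t => (Fml.D t).code | none => 0
noncomputable def opFsub (e m k : ℕ) : ℕ :=
  match decF e, decT m with | some A, some t => (A.subst k t).code | _, _ => 0
noncomputable def opTneg (n : ℕ) : ℕ :=
  match decT n with | some t => (Term.fneg t).code | none => 0
/-- `opUall k ⌜φ⌝` is the code of the `L_T`-sentence `∀t T(φ(t/v_k))`. -/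
noncomputable def opUall (k n : ℕ) : ℕ :=
  (Fml.all 0 ((Fml.ct (.var 0)).imp
    (Fml.T (.fsub (numeral n) (.var 0) (numeral k))))).code
/-- `opUex k ⌜φ⌝` is the code of the `L_T`-sentence `∃t F(φ(t/v_k))`. -/
noncomputable def opUex (k n : ℕ) : ℕ :=
  ((Fml.all 0 ((Fml.ct (.var 0)).imp
    (Fml.not (Fml.T (.fneg (.fsub (numeral n) (.var 0) (numeral k))))))).not).code

/-- Evaluation of terms, with the evaluation symbol `evalt` sent to `0`
(auxiliary for the standard interpretation `opEval` of `evalt`). -/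
noncomputable def Term.val0 (σ : ℕ → ℕ) : Term → ℕ
  | .var n => σ n
  | .zero => 0
  | .succ t => t.val0 σ + 1
  | .add s t => s.val0 σ + t.val0 σ
  | .mul s t => s.val0 σ * t.val0 σ
  | .num t => opNum (t.val0 σ)
  | .fneg t => opFneg (t.val0 σ)
  | .fand s t => opFand (s.val0 σ) (t.val0 σ)
  | .fall s t => opFall (s.val0 σ) (t.val0 σ)
  | .feq s t => opFeq (s.val0 σ) (t.val0 σ)
  | .fT t => opFT (t.val0 σ)
  | .fD t => opFD (t.val0 σ)
  | .fsub e s k => opFsub (e.val0 σ) (s.val0 σ) (k.val0 σ)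
  | .tneg t => opTneg (t.val0 σ)
  | .uall s t => opUall (s.val0 σ) (t.val0 σ)
  | .uex s t => opUex (s.val0 σ) (t.val0 σ)
  | .evalt _ => 0

/-- The standard interpretation of the evaluation symbol: `⌜t⌝ ↦ t°`. -/
noncomputable def opEval (n : ℕ) : ℕ :=
  match decT n with
  | some t => t.val0 (fun _ => (0 : ℕ))
  | none => 0

/-! Arithmetical (standard) interpretations of the syntactic guards. -/

def isCT (n : ℕ) : Prop := ∃ t : Term, t.code = n ∧ t.fv = ∅
def isSentTC (n : ℕ) : Prop := ∃ A : Fml, A.code = n ∧ IsSentT A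
def isSentDC (n : ℕ) : Prop := ∃ A : Fml, A.code = n ∧ IsSentD A
def isFml1TC (k n : ℕ) : Prop :=
  ∃ A : Fml, A.code = n ∧ A.noD ∧ A.noTb ∧ A.fv ⊆ {k}
def isFml1DC (k n : ℕ) : Prop :=
  ∃ A : Fml, A.code = n ∧ A.noTb ∧ A.fv ⊆ {k}

/-- First-order structures for the language (Type-0 domains suffice for
semantic consequence = provability, by completeness & Löwenheim–Skolem). -/
structure Struc where
  M : Type
  zero : M
  succ : M → M
  add : M → M → M
  mul : M → M → M
  num : M → M
  fneg : M → M
  fand : M → M → M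
  fall : M → M → M
  feq : M → M → M
  fT : M → M
  fD : M → M
  fsub : M → M → M → M
  tneg : M → M
  uall : M → M → M
  uex : M → M → M
  evalt : M → M
  T : M → Prop
  D : M → Prop
  Tb : M → Prop
  ct : M → Prop
  sentT : M → Prop
  sentD : M → Prop
  fml1T : M → M → Prop
  fml1D : M → M → Prop

/-- Evaluation of a term in a structure. -/
def Term.evalS (S : Struc) (σ : ℕ → S.M) : Term → S.M
  | .var n => σ n
  | .zero => S.zero
  | .succ t => S.succ (t.evalS S σ)
  | .add s t => S.add (s.evalS S σ) (t.evalS S σ)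
  | .mul s t => S.mul (s.evalS S σ) (t.evalS S σ)
  | .num t => S.num (t.evalS S σ)
  | .fneg t => S.fneg (t.evalS S σ)
  | .fand s t => S.fand (s.evalS S σ) (t.evalS S σ)
  | .fall s t => S.fall (s.evalS S σ) (t.evalS S σ)
  | .feq s t => S.feq (s.evalS S σ) (t.evalS S σ)
  | .fT t => S.fT (t.evalS S σ)
  | .fD t => S.fD (t.evalS S σ)
  | .fsub e s k => S.fsub (e.evalS S σ) (s.evalS S σ) (k.evalS S σ)
  | .tneg t => S.tneg (t.evalS S σ)
  | .uall s t => S.uall (s.evalS S σ) (t.evalS S σ)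
  | .uex s t => S.uex (s.evalS S σ) (t.evalS S σ)
  | .evalt t => S.evalt (t.evalS S σ)

/-- Tarskian satisfaction of a formula in a structure, under a valuation. -/
def Fml.SatS (S : Struc) : (ℕ → S.M) → Fml → Prop
  | σ, .eq s t => s.evalS S σ = t.evalS S σ
  | σ, .T t => S.T (t.evalS S σ)
  | σ, .D t => S.D (t.evalS S σ)
  | σ, .Tb t => S.Tb (t.evalS S σ)
  | σ, .ct t => S.ct (t.evalS S σ)
  | σ, .sentT t => S.sentT (t.evalS S σ)
  | σ, .sentD t => S.sentD (t.evalS S σ)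
  | σ, .fml1T s t => S.fml1T (s.evalS S σ) (t.evalS S σ)
  | σ, .fml1D s t => S.fml1D (s.evalS S σ) (t.evalS S σ)
  | σ, .not A => ¬ Fml.SatS S σ A
  | σ, .and A B => Fml.SatS S σ A ∧ Fml.SatS S σ B
  | σ, .all k A => ∀ m : S.M, Fml.SatS S (Function.update σ k m) A

/-- The standard model `(ℕ, XT, XD, XTb)`: standard arithmetic and syntax,
with `T`, `D` and `𝐓` interpreted by the given sets of codes. -/
noncomputable def stdStruc (XT XD XTb : Set ℕ) : Struc where
  M := ℕ
  zero := 0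
  succ := Nat.succ
  add := (· + ·)
  mul := (· * ·)
  num := opNum
  fneg := opFneg
  fand := opFand
  fall := opFall
  feq := opFeq
  fT := opFT
  fD := opFD
  fsub := opFsub
  tneg := opTneg
  uall := opUall
  uex := opUex
  evalt := opEval
  T := fun n => n ∈ XT
  D := fun n => n ∈ XD
  Tb := fun n => n ∈ XTb
  ct := isCT
  sentT := isSentTC
  sentD := isSentDC
  fml1T := isFml1TC
  fml1D := isFml1DC

/-- Satisfaction in the standard `L_T`-model `(ℕ, X)`. -/
def SatN (X : Set ℕ) (A : Fml) : Prop :=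
  Fml.SatS (stdStruc X ∅ ∅) (fun _ => (0 : ℕ)) A

/-- Satisfaction of all instances (closures) in the standard `L_T`-model. -/
def SatAll (X : Set ℕ) (A : Fml) : Prop :=
  ∀ σ : ℕ → ℕ, Fml.SatS (stdStruc X ∅ ∅) σ A

/-- `(ℕ, X) ⊨ Th` for an `L_T`-theory. -/
def ModelsN (X : Set ℕ) (Th : Set Fml) : Prop := ∀ A ∈ Th, SatAll X A

/-- Satisfaction in the standard `L_D`-model `(ℕ, XD, XT)` (`D` interpreted
by `XD`, `T` by `XT`). -/
def SatND (XD XT : Set ℕ) (A : Fml) : Prop :=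
  Fml.SatS (stdStruc XT XD ∅) (fun _ => (0 : ℕ)) A

/-- `(ℕ, XD, XT) ⊨ Th` for an `L_D`-theory. -/
def ModelsND (XD XT : Set ℕ) (Th : Set Fml) : Prop :=
  ∀ A ∈ Th, ∀ σ : ℕ → ℕ, Fml.SatS (stdStruc XT XD ∅) σ A

/-- Provability: semantic consequence over arbitrary structures (equivalent
to first-order derivability by Gödel's completeness theorem together with
downward Löwenheim–Skolem). -/
def Proves (Th : Set Fml) (A : Fml) : Prop :=
  ∀ (S : Struc) (σ : ℕ → S.M),
    (∀ B ∈ Th, ∀ τ : ℕ → S.M, Fml.SatS S τ B) → Fml.SatS S σ A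

/-- The evaluation `t°` of a closed term in the standard model. -/
noncomputable def tval (t : Term) : ℕ :=
  Term.evalS (stdStruc ∅ ∅ ∅) (fun _ => (0 : ℕ)) t

/-! ## The base theory: elementary syntax/arithmetic plus full induction -/

/-- The arithmetical-syntactic base: all true `L_ℕ`-sentences. -/
def BaseTh : Set Fml :=
  {A | A.noT ∧ A.noD ∧ A.noTb ∧ A.fv = ∅ ∧
    Fml.SatS (stdStruc ∅ ∅ ∅) (fun _ => (0 : ℕ)) A}

/-- Universal closure of a formula. -/
def Fml.close (A : Fml) : Fml :=
  (A.fv.sort (· ≤ ·)).foldr (fun k B => Fml.all k B) A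

/-- Induction axiom for `A` in the variable `v_k` (universally closed;
the schema is available for the full language, including `T`, `D`, `𝐓`). -/
def indAx (k : ℕ) (A : Fml) : Fml :=
  Fml.close (((A.subst k .zero).and
    (Fml.all k (A.imp (A.subst k (.succ (.var k)))))).imp (Fml.all k A))

/-- The full induction schema. -/
def IndTh : Set Fml := {B | ∃ (k : ℕ) (A : Fml), B = indAx k A}

/-! ## Abbreviations: iterated truth and falsity -/

def v0 : Term := .var 0
def v1 : Term := .var 1
def v2 : Term := .var 2
def v3 : Term := .var 3

/-- `⌜T t⌝` from `⌜t⌝`. -/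
def tmT (x : Term) : Term := .fT x
/-- `⌜F t⌝ = ⌜T(¬.t)⌝` from `⌜t⌝` (falsity as truth of the negation). -/
def tmF (x : Term) : Term := .fT (.tneg x)
/-- `TTφ`, i.e. `T⌜T(num φ)⌝`, for `φ` a sentence code. -/
def sTT (x : Term) : Fml := .T (tmT (.num x))
/-- `TFφ`, i.e. `T⌜F(num φ)⌝`, for `φ` a sentence code. -/
def sTF (x : Term) : Fml := .T (tmF (.num x))
/-- `TT t`, i.e. `T⌜T t⌝`, for `t` a closed-term code. -/
def tTT (x : Term) : Fml := .T (tmT x)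
/-- `TF t`, i.e. `T⌜F t⌝`, for `t` a closed-term code. -/
def tTF (x : Term) : Fml := .T (tmF x)

/-! ## The three definitions of determinateness -/

/-- `D x :↔ TTx ∨ TFx` (for consistent fixed points). -/
def dfCons (x : Term) : Fml := (sTT x).or (sTF x)
/-- `D x :↔ ¬TTx ∨ ¬TFx` (for complete fixed points). -/
def dfComp (x : Term) : Fml := ((sTT x).not).or ((sTF x).not)
/-- `D x :↔ (TTx ∨ TFx) ∧ (¬TTx ∨ ¬TFx)` (for symmetric fixed points). -/
def dfSym (x : Term) : Fml := (dfCons x).and (dfComp x)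

/-- `⌜D t⌝` for the primitive determinateness predicate. -/
def dcodePrim (x : Term) : Term := .fD x
/-- `⌜D t⌝` for a defined determinateness predicate `df`: the code of the
defining formula with `t` substituted for its variable. -/
noncomputable def dcodeOf (df : Term → Fml) (x : Term) : Term :=
  .fsub (numeral (df (.var 0)).code) x (numeral 0)

/-! ## The axioms of `CD⁺` (Fujimoto–Halbach), parametrized by the
determinateness predicate `df`, its code-builder `dc`, and the sentence and
formula guards `gS`, `gF` of the relevant language. -/

def axT1 : Fml :=
  .all 0 (.all 1 (((Fml.ct v0).and (Fml.ct v1)).imp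
    (Fml.iff (Fml.T (.feq v0 v1)) (.eq (.evalt v0) (.evalt v1)))))

def axT2p (df : Term → Fml) (dc : Term → Term) : Fml :=
  .all 0 ((Fml.ct v0).imp (Fml.iff (df (.evalt v0)) (Fml.T (dc v0))))

def axT3 (df : Term → Fml) : Fml :=
  .all 0 ((Fml.ct v0).imp ((df (.evalt v0)).imp
    (Fml.iff (tTT v0) (Fml.T (.evalt v0)))))

def axT4 (gS : Term → Fml) : Fml :=
  .all 0 ((gS v0).imp (Fml.iff (Fml.T (.fneg v0)) (Fml.not (Fml.T v0))))

def axT5 (gS : Term → Fml) : Fml :=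
  .all 0 (.all 1 (((gS v0).and (gS v1)).imp
    (Fml.iff (Fml.T (.fand v0 v1)) ((Fml.T v0).and (Fml.T v1)))))

def axT6 (gF : Term → Term → Fml) : Fml :=
  .all 0 (.all 1 ((gF v0 v1).imp
    (Fml.iff (Fml.T (.fall v0 v1))
      (.all 2 ((Fml.ct v2).imp (Fml.T (.fsub v1 v2 v0)))))))

def axD1 (df : Term → Fml) : Fml :=
  .all 0 (.all 1 (((Fml.ct v0).and (Fml.ct v1)).imp (df (.feq v0 v1))))

def axD2 (df : Term → Fml) : Fml :=
  .all 0 ((Fml.ct v0).imp (Fml.iff (df (tmT v0)) (df (.evalt v0))))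

def axD3 (df : Term → Fml) (dc : Term → Term) : Fml :=
  .all 0 ((Fml.ct v0).imp (Fml.iff (df (dc v0)) (df (.evalt v0))))

def axD4 (df : Term → Fml) (gS : Term → Fml) : Fml :=
  .all 0 ((gS v0).imp (Fml.iff (df (.fneg v0)) (df v0)))

def axD5 (df : Term → Fml) (gS : Term → Fml) : Fml :=
  .all 0 (.all 1 (((gS v0).and (gS v1)).imp
    (Fml.iff (df (.fand v0 v1))
      ((((df v0).and (df v1)).or ((df v0).and (Fml.T (.fneg v0)))).or
        ((df v1).and (Fml.T (.fneg v1)))))))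

def axD6 (df : Term → Fml) (gF : Term → Term → Fml) : Fml :=
  .all 0 (.all 1 ((gF v0 v1).imp
    (Fml.iff (df (.fall v0 v1))
      ((Fml.all 2 ((Fml.ct v2).imp (df (.fsub v1 v2 v0)))).or
        (Fml.ex 2 ((Fml.ct v2).and
          ((df (.fsub v1 v2 v0)).and (Fml.T (.fneg (.fsub v1 v2 v0))))))))))

def axR1 (gF : Term → Term → Fml) : Fml :=
  .all 0 (.all 1 (.all 2 (.all 3 (((gF v0 v1).and ((Fml.ct v2).and (Fml.ct v3))).imp
    ((Fml.eq (.evalt v2) (.evalt v3)).imp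
      (Fml.iff (Fml.T (.fsub v1 v2 v0)) (Fml.T (.fsub v1 v3 v0))))))))

def axR2 (df : Term → Fml) (gF : Term → Term → Fml) : Fml :=
  .all 0 (.all 1 (.all 2 (.all 3 (((gF v0 v1).and ((Fml.ct v2).and (Fml.ct v3))).imp
    ((Fml.eq (.evalt v2) (.evalt v3)).imp
      (Fml.iff (df (.fsub v1 v2 v0)) (df (.fsub v1 v3 v0))))))))

/-- The `CD⁺`-style axiom set over the base theory and full induction. -/
noncomputable def CDAx (df : Term → Fml) (dc : Term → Term)
    (gS : Term → Fml) (gF : Term → Term → Fml) : Set Fml :=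
  BaseTh ∪ IndTh ∪
    {axT1, axT2p df dc, axT3 df, axT4 gS, axT5 gS, axT6 gF,
     axD1 df, axD2 df, axD3 df dc, axD4 df gS, axD5 df gS, axD6 df gF,
     axR1 gF, axR2 df gF}

/-- Fujimoto–Halbach's `CD⁺`, with primitive `D`, in `L_D`. -/
noncomputable def CDplus : Set Fml := CDAx Fml.D dcodePrim Fml.sentD Fml.fml1D

/-- `CD⁺↾`: the axioms of `CD⁺` in `L_T` with `D x` defined as `TTx ∨ TFx`. -/
noncomputable def CDplusRes : Set Fml :=
  CDAx dfCons (dcodeOf dfCons) Fml.sentT Fml.fml1T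

/-- `CD⁺↾cp`: the axioms of `CD⁺` with `D x` defined as `¬TTx ∨ ¬TFx`. -/
noncomputable def CDplusResCp : Set Fml :=
  CDAx dfComp (dcodeOf dfComp) Fml.sentT Fml.fml1T

/-- `CD⁺↾sym`: the axioms of `CD⁺` with
`D x` defined as `(TTx ∨ TFx) ∧ (¬TTx ∨ ¬TFx)`. -/
noncomputable def CDplusResSym : Set Fml :=
  CDAx dfSym (dcodeOf dfSym) Fml.sentT Fml.fml1T

/-! ## The classical closure of Kripke–Feferman truth: `CKF` and `CKFcp` -/

def axT7 : Fml :=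
  .all 0 (.all 1 (((Fml.ct v0).and (Fml.ct v1)).imp
    (Fml.iff (sTT (.feq v0 v1)) (.eq (.evalt v0) (.evalt v1)))))

def axT8 : Fml :=
  .all 0 (.all 1 (((Fml.ct v0).and (Fml.ct v1)).imp
    (Fml.iff (sTF (.feq v0 v1)) (Fml.not (.eq (.evalt v0) (.evalt v1))))))

def axT9 : Fml :=
  .all 0 ((Fml.sentT v0).imp (Fml.iff (sTT v0) (sTT (.fneg (.fneg v0)))))

def axT10 : Fml :=
  .all 0 (.all 1 (((Fml.sentT v0).and (Fml.sentT v1)).imp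
    (Fml.iff (sTT (.fand v0 v1)) ((sTT v0).and (sTT v1)))))

def axT11 : Fml :=
  .all 0 (.all 1 (((Fml.sentT v0).and (Fml.sentT v1)).imp
    (Fml.iff (sTF (.fand v0 v1)) ((sTF v0).or (sTF v1)))))

def axT12 : Fml :=
  .all 0 (.all 1 ((Fml.fml1T v0 v1).imp
    (Fml.iff (sTT (.fall v0 v1)) (Fml.T (.uall v0 v1)))))

def axT13 : Fml :=
  .all 0 (.all 1 ((Fml.fml1T v0 v1).imp
    (Fml.iff (sTF (.fall v0 v1)) (Fml.T (.uex v0 v1)))))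

def axT14 : Fml :=
  .all 0 ((Fml.ct v0).imp (Fml.iff (sTT (tmT v0)) (tTT v0)))

def axT15 : Fml :=
  .all 0 ((Fml.ct v0).imp (Fml.iff (sTF (tmT v0)) (tTF v0)))

/-- `TDel : ∀t(TTt → Tt°)`. -/
def axTDel : Fml :=
  .all 0 ((Fml.ct v0).imp ((tTT v0).imp (Fml.T (.evalt v0))))

/-- `TRep : ∀t(Tt° → TTt)`. -/
def axTRep : Fml :=
  .all 0 ((Fml.ct v0).imp ((Fml.T (.evalt v0)).imp (tTT v0)))

/-- `CKF` without its consistency axiom `TDel`. -/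
noncomputable def CKFminus : Set Fml :=
  BaseTh ∪ IndTh ∪
    {axT1, axT4 Fml.sentT, axT5 Fml.sentT, axT6 Fml.fml1T,
     axT7, axT8, axT9, axT10, axT11, axT12, axT13, axT14, axT15,
     axR1 Fml.fml1T}

/-- The classical closure `CKF` of `KF + CONS`. -/
noncomputable def CKF : Set Fml := insert axTDel CKFminus

/-- The classical closure `CKFcp` of `KF + COMP`. -/
noncomputable def CKFcp : Set Fml := insert axTRep CKFminus

/-! ## `KF + CONS` and `CT[KF + CONS]` -/

def axKF1 : Fml :=
  .all 0 (.all 1 (((Fml.ct v0).and (Fml.ct v1)).imp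
    ((Fml.iff (Fml.T (.feq v0 v1)) (.eq (.evalt v0) (.evalt v1))).and
     (Fml.iff (Fml.T (.fneg (.feq v0 v1))) (Fml.not (.eq (.evalt v0) (.evalt v1)))))))

def axKF2 : Fml :=
  .all 0 ((Fml.ct v0).imp
    ((Fml.iff (Fml.T (tmT v0)) (Fml.T (.evalt v0))).and
     (Fml.iff (Fml.T (.fneg (tmT v0)))
       ((Fml.T (.fneg (.evalt v0))).or (Fml.not (Fml.sentT (.evalt v0)))))))

def axKF3 : Fml :=
  .all 0 ((Fml.sentT v0).imp
    (Fml.iff (Fml.T (.fneg (.fneg v0))) (Fml.T v0)))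

def axKF4 : Fml :=
  .all 0 (.all 1 (((Fml.sentT v0).and (Fml.sentT v1)).imp
    ((Fml.iff (Fml.T (.fand v0 v1)) ((Fml.T v0).and (Fml.T v1))).and
     (Fml.iff (Fml.T (.fneg (.fand v0 v1)))
       ((Fml.T (.fneg v0)).or (Fml.T (.fneg v1)))))))

def axKF5 : Fml :=
  .all 0 (.all 1 ((Fml.fml1T v0 v1).imp
    ((Fml.iff (Fml.T (.fall v0 v1))
        (.all 2 ((Fml.ct v2).imp (Fml.T (.fsub v1 v2 v0))))).and
     (Fml.iff (Fml.T (.fneg (.fall v0 (.fneg v1))))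
        (Fml.ex 2 ((Fml.ct v2).and (Fml.T (.fsub v1 v2 v0))))))))

/-- `CONS : ∀φ(Fφ → ¬Tφ)`. -/
def axCons : Fml :=
  .all 0 ((Fml.sentT v0).imp ((Fml.T (.fneg v0)).imp (Fml.not (Fml.T v0))))

/-- `COMP : ∀φ(¬Tφ → Fφ)`. -/
def axComp : Fml :=
  .all 0 ((Fml.sentT v0).imp ((Fml.not (Fml.T v0)).imp (Fml.T (.fneg v0))))

noncomputable def KFCONS : Set Fml :=
  BaseTh ∪ IndTh ∪ {axKF1, axKF2, axKF3, axKF4, axKF5, axCons}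

def axTb1 : Fml :=
  .all 0 (.all 1 (((Fml.ct v0).and (Fml.ct v1)).imp
    (Fml.iff (Fml.Tb (.feq v0 v1)) (.eq (.evalt v0) (.evalt v1)))))

def axTb1b : Fml :=
  .all 0 ((Fml.ct v0).imp (Fml.iff (Fml.Tb (tmT v0)) (Fml.T (.evalt v0))))

def axTb2 : Fml :=
  .all 0 ((Fml.sentT v0).imp
    (Fml.iff (Fml.Tb (.fneg v0)) (Fml.not (Fml.Tb v0))))

def axTb3 : Fml :=
  .all 0 (.all 1 (((Fml.sentT v0).and (Fml.sentT v1)).imp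
    (Fml.iff (Fml.Tb (.fand v0 v1)) ((Fml.Tb v0).and (Fml.Tb v1)))))

def axTb4 : Fml :=
  .all 0 (.all 1 ((Fml.fml1T v0 v1).imp
    (Fml.iff (Fml.Tb (.fall v0 v1))
      (.all 2 ((Fml.ct v2).imp (Fml.Tb (.fsub v1 v2 v0)))))))

/-- `CT[KF + CONS]`: `KF + CONS` with a Tarskian truth predicate `𝐓` on top. -/
noncomputable def CTKFC : Set Fml :=
  KFCONS ∪ {axTb1, axTb1b, axTb2, axTb3, axTb4}

/-! ## The Strong Kleene jump and its fixed points -/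

/-- The Strong Kleene jump `𝒦` on sets of codes of `L_T`-sentences. -/
noncomputable def K (X : Set ℕ) : Set ℕ :=
  {n | isSentTC n ∧ (
    (∃ s t : Term, s.fv = ∅ ∧ t.fv = ∅ ∧ n = (Fml.eq s t).code ∧ tval s = tval t) ∨
    (∃ s t : Term, s.fv = ∅ ∧ t.fv = ∅ ∧ n = (Fml.eq s t).not.code ∧ tval s ≠ tval t) ∨
    (∃ t : Term, t.fv = ∅ ∧ n = (Fml.T t).code ∧ tval t ∈ X) ∨
    (∃ t : Term, t.fv = ∅ ∧ n = (Fml.T t).not.code ∧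
      (opFneg (tval t) ∈ X ∨ ¬ isSentTC (tval t))) ∨
    (∃ t : Term, t.fv = ∅ ∧ n = (Fml.ct t).code ∧ isCT (tval t)) ∨
    (∃ t : Term, t.fv = ∅ ∧ n = (Fml.ct t).not.code ∧ ¬ isCT (tval t)) ∨
    (∃ t : Term, t.fv = ∅ ∧ n = (Fml.sentT t).code ∧ isSentTC (tval t)) ∨
    (∃ t : Term, t.fv = ∅ ∧ n = (Fml.sentT t).not.code ∧ ¬ isSentTC (tval t)) ∨
    (∃ t : Term, t.fv = ∅ ∧ n = (Fml.sentD t).code ∧ isSentDC (tval t)) ∨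
    (∃ t : Term, t.fv = ∅ ∧ n = (Fml.sentD t).not.code ∧ ¬ isSentDC (tval t)) ∨
    (∃ s t : Term, s.fv = ∅ ∧ t.fv = ∅ ∧ n = (Fml.fml1T s t).code ∧
      isFml1TC (tval s) (tval t)) ∨
    (∃ s t : Term, s.fv = ∅ ∧ t.fv = ∅ ∧ n = (Fml.fml1T s t).not.code ∧
      ¬ isFml1TC (tval s) (tval t)) ∨
    (∃ s t : Term, s.fv = ∅ ∧ t.fv = ∅ ∧ n = (Fml.fml1D s t).code ∧
      isFml1DC (tval s) (tval t)) ∨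
    (∃ s t : Term, s.fv = ∅ ∧ t.fv = ∅ ∧ n = (Fml.fml1D s t).not.code ∧
      ¬ isFml1DC (tval s) (tval t)) ∨
    (∃ A : Fml, n = A.not.not.code ∧ A.code ∈ X) ∨
    (∃ A B : Fml, n = (A.and B).code ∧ A.code ∈ X ∧ B.code ∈ X) ∨
    (∃ A B : Fml, n = (A.and B).not.code ∧ (A.not.code ∈ X ∨ B.not.code ∈ X)) ∨
    (∃ (k : ℕ) (A : Fml), n = (Fml.all k A).code ∧
      ∀ t : Term, t.fv = ∅ → (A.subst k t).code ∈ X) ∨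
    (∃ (k : ℕ) (A : Fml), n = (Fml.all k A).not.code ∧
      ∃ t : Term, t.fv = ∅ ∧ (A.subst k t).not.code ∈ X))}

/-- `X` is a fixed point of the Strong Kleene jump. -/
noncomputable def IsFP (X : Set ℕ) : Prop := K X = X

/-- `X` is consistent: no sentence is in `X` together with its negation. -/
def ConsistentS (X : Set ℕ) : Prop :=
  ∀ A : Fml, ¬ (A.code ∈ X ∧ A.not.code ∈ X)

/-- `X` is complete: every `L_T`-sentence or its negation is in `X`. -/
def CompleteS (X : Set ℕ) : Prop :=
  ∀ A : Fml, IsSentT A → (A.code ∈ X ∨ A.not.code ∈ X)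

/-- `𝕋_X`: the set of (codes of) `L_T`-sentences true in `(ℕ, X)` — the
classical closure of `X`. -/
def TrueSet (X : Set ℕ) : Set ℕ :=
  {n | ∃ A : Fml, A.code = n ∧ IsSentT A ∧ SatN X A}

/-- The inner extension `S^𝒮 = {A : (ℕ, S) ⊨ T⌜T⌜A⌝⌝}`. -/
def SI (S : Set ℕ) : Set ℕ :=
  {n | ∃ A : Fml, A.code = n ∧ IsSentT A ∧
    SatN S (Fml.T (numeral ((Fml.T (numeral A.code)).code)))}

/-! ## The Fujimoto–Halbach model construction for `CD⁺` -/

/-- The positive inductive operator `Γ_Y(X)` associated with the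
(right-to-left directions of) the determinateness axioms `D1`–`D6`. -/
noncomputable def Gamma (Y X : Set ℕ) : Set ℕ :=
  {n | isSentDC n ∧ (
    (∃ s t : Term, s.fv = ∅ ∧ t.fv = ∅ ∧ n = (Fml.eq s t).code) ∨
    (∃ t : Term, t.fv = ∅ ∧ n = (Fml.T t).code ∧ tval t ∈ X) ∨
    (∃ t : Term, t.fv = ∅ ∧ n = (Fml.D t).code ∧ tval t ∈ X) ∨
    (∃ A : Fml, n = A.not.code ∧ A.code ∈ X) ∨
    (∃ A B : Fml, n = (A.and B).code ∧
      ((A.code ∈ X ∧ B.code ∈ X) ∨ (A.code ∈ X ∧ A.not.code ∈ Y) ∨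
        (B.code ∈ X ∧ B.not.code ∈ Y))) ∨
    (∃ (k : ℕ) (A : Fml), n = (Fml.all k A).code ∧
      ((∀ t : Term, t.fv = ∅ → (A.subst k t).code ∈ X) ∨
        (∃ t : Term, t.fv = ∅ ∧ (A.subst k t).code ∈ X ∧
          (A.subst k t).not.code ∈ Y))))}

/-- The set of codes of `L_D`-sentences true in `(ℕ, XD, XT)`. -/
def TrueSetD (XD XT : Set ℕ) : Set ℕ :=
  {n | ∃ A : Fml, A.code = n ∧ IsSentD A ∧ SatND XD XT A}

/-- The Fujimoto–Halbach simultaneous transfinite recursion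
`(D_α, T_α)` (Def. on p. `semcdp` of the paper). -/
noncomputable def FH : Ordinal.{0} → Set ℕ × Set ℕ := fun α =>
  Ordinal.limitRecOn α (∅, ∅)
    (fun _ p => (Gamma p.2 p.1, TrueSetD p.1 p.2))
    (fun β _ ih =>
      ({n | ∃ (γ : Ordinal) (h : γ < β), n ∈ (ih γ h).1},
       {n | ∃ (γ : Ordinal) (h : γ < β), n ∈ (ih γ h).1 ∩ (ih γ h).2}))

/-- `D∞ = D_{ω₁}`. -/
noncomputable def DInf : Set ℕ := (FH (Cardinal.aleph 1).ord).1
/-- `T∞ = T_{ω₁}`. -/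
noncomputable def TInf : Set ℕ := (FH (Cardinal.aleph 1).ord).2

/-! ## `L_ℕ`-translations and the dual translation -/

/-- An `L_ℕ`-translation: it does not relativize quantifiers, commutes with
the logical operations, and is the identity on the arithmetical-syntactic
vocabulary (only the atoms `T`, `D`, `𝐓` may be re-interpreted). -/
structure LNTrans where
  d : Fml → Fml
  map_eq : ∀ s t, d (Fml.eq s t) = Fml.eq s t
  map_ct : ∀ t, d (Fml.ct t) = Fml.ct t
  map_sentT : ∀ t, d (Fml.sentT t) = Fml.sentT t
  map_sentD : ∀ t, d (Fml.sentD t) = Fml.sentD t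
  map_fml1T : ∀ s t, d (Fml.fml1T s t) = Fml.fml1T s t
  map_fml1D : ∀ s t, d (Fml.fml1D s t) = Fml.fml1D s t
  map_not : ∀ A, d A.not = (d A).not
  map_and : ∀ A B, d (A.and B) = (d A).and (d B)
  map_all : ∀ k A, d (Fml.all k A) = Fml.all k (d A)

/-- `Th₂` `L_ℕ`-interprets `Th₁`. -/
def LNInterp (Th₁ Th₂ : Set Fml) : Prop :=
  ∃ τ : LNTrans, ∀ A : Fml, Proves Th₁ A → Proves Th₂ (τ.d A)

/-- Mutual `L_ℕ`-interpretability. -/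
def MutualLNInterp (Th₁ Th₂ : Set Fml) : Prop :=
  LNInterp Th₁ Th₂ ∧ LNInterp Th₂ Th₁

/-- Cantini's dual translation `c`: it preserves the arithmetical vocabulary,
commutes with the logical operations, and maps `T x` to `¬F x`. -/
def Fml.dual : Fml → Fml
  | .eq s t => .eq s t
  | .T t => (Fml.T (.fneg t)).not
  | .D t => .D t
  | .Tb t => .Tb t
  | .ct t => .ct t
  | .sentT t => .sentT t
  | .sentD t => .sentD t
  | .fml1T s t => .fml1T s t
  | .fml1D s t => .fml1D s t
  | .not A => A.dual.not
  | .and A B => A.dual.and B.dual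
  | .all k A => .all k A.dual

/-! ### Auxiliary development for Statement 5 -/

theorem Term.code_inj : ∀ s t : Term, s.code = t.code → s = t := by
  intro s
  induction s <;> intro t h <;> cases t <;>
    simp_all [Term.code, Nat.pair_eq_pair] <;> aesop

theorem Fml.code_inj : ∀ A B : Fml, A.code = B.code → A = B := by
  intro A
  induction A <;> intro B h <;> cases B <;>
    simp_all [Fml.code, Nat.pair_eq_pair] <;>
    first
      | exact Term.code_inj _ _ h
      | exact ⟨Term.code_inj _ _ h.1, Term.code_inj _ _ h.2⟩
      | aesop

theorem Fml.code_ne_zero (A : Fml) : A.code ≠ 0 := by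
  have h : ∀ a b : ℕ, 101 ≤ a → Nat.pair a b ≠ 0 := by
    intro a b ha
    have := Nat.left_le_pair a b
    omega
  cases A <;> exact h _ _ (by norm_num)

/-! ### Evaluation and substitution lemmas -/

theorem Term.evalS_agree (S : Struc) (σ σ' : ℕ → S.M) (t : Term)
    (h : ∀ n ∈ t.fv, σ n = σ' n) : t.evalS S σ = t.evalS S σ' := by
  induction t <;> simp_all [Term.evalS, Term.fv]

theorem Term.evalS_subst (S : Struc) (σ : ℕ → S.M) (k : ℕ) (t : Term) :
    ∀ u : Term, Term.evalS S (Function.update σ k (t.evalS S σ)) u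
      = (Term.subst k t u).evalS S σ := by
  intro u
  induction u <;> simp_all [Term.subst, Term.evalS]
  rename_i n
  by_cases h : n = k <;> simp [h, Term.evalS, Function.update]

theorem Fml.SatS_agree (S : Struc) (A : Fml) : ∀ (σ σ' : ℕ → S.M),
    (∀ n ∈ A.fv, σ n = σ' n) → (Fml.SatS S σ A ↔ Fml.SatS S σ' A) := by
  induction A with
  | eq s t =>
      intro σ σ' h
      simp only [Fml.SatS]
      rw [Term.evalS_agree S σ σ' s (fun n hn => h n (by simp [Fml.fv, hn])),
          Term.evalS_agree S σ σ' t (fun n hn => h n (by simp [Fml.fv, hn]))]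
  | T t =>
      intro σ σ' h
      simp only [Fml.SatS]
      rw [Term.evalS_agree S σ σ' t (fun n hn => h n (by simp [Fml.fv, hn]))]
  | D t =>
      intro σ σ' h
      simp only [Fml.SatS]
      rw [Term.evalS_agree S σ σ' t (fun n hn => h n (by simp [Fml.fv, hn]))]
  | Tb t =>
      intro σ σ' h
      simp only [Fml.SatS]
      rw [Term.evalS_agree S σ σ' t (fun n hn => h n (by simp [Fml.fv, hn]))]
  | ct t =>
      intro σ σ' h
      simp only [Fml.SatS]
      rw [Term.evalS_agree S σ σ' t (fun n hn => h n (by simp [Fml.fv, hn]))]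
  | sentT t =>
      intro σ σ' h
      simp only [Fml.SatS]
      rw [Term.evalS_agree S σ σ' t (fun n hn => h n (by simp [Fml.fv, hn]))]
  | sentD t =>
      intro σ σ' h
      simp only [Fml.SatS]
      rw [Term.evalS_agree S σ σ' t (fun n hn => h n (by simp [Fml.fv, hn]))]
  | fml1T s t =>
      intro σ σ' h
      simp only [Fml.SatS]
      rw [Term.evalS_agree S σ σ' s (fun n hn => h n (by simp [Fml.fv, hn])),
          Term.evalS_agree S σ σ' t (fun n hn => h n (by simp [Fml.fv, hn]))]
  | fml1D s t =>
      intro σ σ' h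
      simp only [Fml.SatS]
      rw [Term.evalS_agree S σ σ' s (fun n hn => h n (by simp [Fml.fv, hn])),
          Term.evalS_agree S σ σ' t (fun n hn => h n (by simp [Fml.fv, hn]))]
  | not A ih =>
      intro σ σ' h
      exact not_congr (ih σ σ' h)
  | and A B ihA ihB =>
      intro σ σ' h
      exact and_congr (ihA σ σ' fun n hn => h n (by simp [Fml.fv, hn]))
        (ihB σ σ' fun n hn => h n (by simp [Fml.fv, hn]))
  | all k A ih =>
      intro σ σ' h
      refine forall_congr' fun m => ih _ _ fun n hn => ?_
      by_cases hnk : n = k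
      · subst hnk; simp
      · simp only [Function.update, dif_neg hnk]
        simpa [hnk] using h n (Finset.mem_erase.2 ⟨hnk, hn⟩)

theorem Fml.SatS_subst (S : Struc) (k : ℕ) (t : Term) (ht : t.fv ⊆ {k}) :
    ∀ (A : Fml) (σ : ℕ → S.M),
    (Fml.SatS S σ (A.subst k t) ↔ Fml.SatS S (Function.update σ k (t.evalS S σ)) A) := by
  intro A
  induction A with
  | eq s u => intro σ; simp [Fml.subst, Fml.SatS, Term.evalS_subst]
  | T u => intro σ; simp [Fml.subst, Fml.SatS, Term.evalS_subst]
  | D u => intro σ; simp [Fml.subst, Fml.SatS, Term.evalS_subst]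
  | Tb u => intro σ; simp [Fml.subst, Fml.SatS, Term.evalS_subst]
  | ct u => intro σ; simp [Fml.subst, Fml.SatS, Term.evalS_subst]
  | sentT u => intro σ; simp [Fml.subst, Fml.SatS, Term.evalS_subst]
  | sentD u => intro σ; simp [Fml.subst, Fml.SatS, Term.evalS_subst]
  | fml1T s u => intro σ; simp [Fml.subst, Fml.SatS, Term.evalS_subst]
  | fml1D s u => intro σ; simp [Fml.subst, Fml.SatS, Term.evalS_subst]
  | not A ih => intro σ; simp only [Fml.subst, Fml.SatS]; rw [ih]
  | and A B ihA ihB => intro σ; simp only [Fml.subst, Fml.SatS]; rw [ihA, ihB]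
  | all j A ih =>
      intro σ
      by_cases hjk : j = k
      · subst hjk
        simp only [Fml.subst, if_pos rfl, Fml.SatS]
        refine forall_congr' fun m => ?_
        rw [Function.update_idem]
      · simp only [Fml.subst, if_neg hjk, Fml.SatS]
        refine forall_congr' fun m => ?_
        rw [ih]
        have het : t.evalS S (Function.update σ j m) = t.evalS S σ := by
          apply Term.evalS_agree
          intro n hn
          have hnk : n = k := by simpa using ht hn
          subst hnk
          simp [Function.update, Ne.symm hjk]
        rw [het, Function.update_comm hjk]

theorem Term.subst_of_closed (k : ℕ) (s : Term) :
    ∀ t : Term, k ∉ t.fv → Term.subst k s t = t := by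
  intro t
  induction t <;> simp_all [Term.subst, Term.fv]
  omega

theorem Term.fv_subst (k : ℕ) (t : Term) (ht : t.fv = ∅) :
    ∀ u : Term, (Term.subst k t u).fv = u.fv.erase k := by
  intro u
  induction u <;>
    simp_all [Term.subst, Term.fv, Finset.erase_union_distrib]
  rename_i n
  by_cases h : n = k
  · subst h; simp [Term.fv, ht]
  · simp [h, Term.fv]
    rw [Finset.erase_eq_of_notMem (by simp [Ne.symm h])]

theorem Fml.fv_subst (k : ℕ) (t : Term) (ht : t.fv = ∅) :
    ∀ A : Fml, (A.subst k t).fv = A.fv.erase k := by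
  intro A
  induction A <;>
    simp_all [Fml.subst, Fml.fv, Term.fv_subst k t ht, Finset.erase_union_distrib]
  rename_i j A ih
  by_cases hjk : j = k
  · subst hjk; simp [Fml.fv, Finset.erase_idem]
  · simp [hjk, Fml.fv, ih, Finset.erase_right_comm]

theorem Fml.noTb_subst (k : ℕ) (t : Term) :
    ∀ A : Fml, (A.subst k t).noTb ↔ A.noTb := by
  intro A
  induction A <;> simp_all [Fml.subst, Fml.noTb]
  rename_i j A ih
  by_cases hjk : j = k <;> simp [hjk, Fml.noTb, ih]

theorem Term.subst_comm (j k : ℕ) (hjk : j ≠ k) (t u : Term)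
    (ht : t.fv = ∅) (hu : u.fv = ∅) :
    ∀ w : Term, Term.subst j u (Term.subst k t w) = Term.subst k t (Term.subst j u w) := by
  intro w
  induction w <;> simp_all [Term.subst]
  rename_i n
  by_cases h1 : n = k
  · subst h1
    simp [Term.subst, Ne.symm hjk, Term.subst_of_closed j u t (by simp [ht])]
  · by_cases h2 : n = j
    · subst h2
      simp [Term.subst, h1, Term.subst_of_closed k t u (by simp [hu])]
    · simp [Term.subst, h1, h2]

theorem Fml.subst_comm (j k : ℕ) (hjk : j ≠ k) (t u : Term)
    (ht : t.fv = ∅) (hu : u.fv = ∅) :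
    ∀ A : Fml, (A.subst k t).subst j u = (A.subst j u).subst k t := by
  intro A
  induction A <;> simp_all [Fml.subst, Term.subst_comm j k hjk t u ht hu]
  rename_i m A ih
  by_cases h1 : m = k
  · subst h1
    simp [Fml.subst, if_neg (Ne.symm hjk), Ne.symm hjk]
  · by_cases h2 : m = j
    · subst h2
      simp [Fml.subst, h1, hjk]
    · simp [Fml.subst, h1, h2, ih]

/-- Size of a formula (substitution-invariant). -/
def Fml.fsize : Fml → ℕ
  | .not A => A.fsize + 1
  | .and A B => A.fsize + B.fsize + 1
  | .all _ A => A.fsize + 1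
  | _ => 0

theorem Fml.fsize_subst (k : ℕ) (t : Term) :
    ∀ A : Fml, (A.subst k t).fsize = A.fsize := by
  intro A
  induction A <;> simp_all [Fml.subst, Fml.fsize]
  rename_i j A ih
  by_cases hjk : j = k <;> simp [hjk, Fml.fsize, ih]

theorem numeral_fv (m : ℕ) : (numeral m).fv = ∅ := by
  induction m <;> simp_all [numeral, Term.fv]

theorem numeral_val0 (σ : ℕ → ℕ) (m : ℕ) : (numeral m).val0 σ = m := by
  induction m <;> simp_all [numeral, Term.val0]

/-! ### Decoding and syntactic-operation computation lemmas -/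

theorem decT_code (t : Term) : decT t.code = some t := by
  unfold decT
  have h : ∃ s : Term, s.code = t.code := ⟨t, rfl⟩
  rw [dif_pos h]
  exact congrArg some (Term.code_inj _ _ h.choose_spec)

theorem decF_code (A : Fml) : decF A.code = some A := by
  unfold decF
  have h : ∃ B : Fml, B.code = A.code := ⟨A, rfl⟩
  rw [dif_pos h]
  exact congrArg some (Fml.code_inj _ _ h.choose_spec)

abbrev zf : ℕ → ℕ := fun _ => 0

theorem opNum_code (m : ℕ) : opNum m = (numeral m).code := rfl
theorem opFneg_code (A : Fml) : opFneg A.code = A.not.code := by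
  simp [opFneg, decF_code]
theorem opFand_code (A B : Fml) : opFand A.code B.code = (A.and B).code := by
  simp [opFand, decF_code]
theorem opFall_code (k : ℕ) (A : Fml) : opFall k A.code = (Fml.all k A).code := by
  simp [opFall, decF_code]
theorem opFeq_code (s t : Term) : opFeq s.code t.code = (Fml.eq s t).code := by
  simp [opFeq, decT_code]
theorem opFT_code (t : Term) : opFT t.code = (Fml.T t).code := by
  simp [opFT, decT_code]
theorem opFD_code (t : Term) : opFD t.code = (Fml.D t).code := by
  simp [opFD, decT_code]
theorem opFsub_code (A : Fml) (t : Term) (k : ℕ) :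
    opFsub A.code t.code k = (A.subst k t).code := by
  simp [opFsub, decF_code, decT_code]
theorem opTneg_code (t : Term) : opTneg t.code = (Term.fneg t).code := by
  simp [opTneg, decT_code]
theorem opEval_code (t : Term) : opEval t.code = t.val0 zf := by
  simp [opEval, decT_code]

/-! ### The inner structure -/

/-- The inner structure: standard syntax with `evalt` trivial, `T` and `D`
interpreted by given sets. -/
noncomputable def iStr (YT YD : Set ℕ) : Struc where
  M := ℕ
  zero := 0
  succ := Nat.succ
  add := (· + ·)
  mul := (· * ·)
  num := opNum
  fneg := opFneg
  fand := opFand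
  fall := opFall
  feq := opFeq
  fT := opFT
  fD := opFD
  fsub := opFsub
  tneg := opTneg
  uall := opUall
  uex := opUex
  evalt := fun _ => 0
  T := fun n => n ∈ YT
  D := fun n => n ∈ YD
  Tb := fun _ => False
  ct := isCT
  sentT := isSentTC
  sentD := isSentDC
  fml1T := isFml1TC
  fml1D := isFml1DC

theorem evalS_iStr (YT YD : Set ℕ) (σ : ℕ → ℕ) :
    ∀ t : Term, Term.evalS (iStr YT YD) σ t = Term.val0 σ t := by
  intro t
  induction t <;> simp_all [Term.evalS, Term.val0, iStr]

theorem Term.val0_subst (σ : ℕ → ℕ) (k : ℕ) (t u : Term) :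
    Term.val0 σ (Term.subst k t u)
      = Term.val0 (Function.update σ k (t.val0 σ)) u := by
  have h := Term.evalS_subst (iStr ∅ ∅) σ k t u
  exact (evalS_iStr ∅ ∅ σ _).symm.trans (h.symm.trans
    ((congrArg (fun x => Term.evalS (iStr ∅ ∅) (Function.update σ k x) u) (evalS_iStr ∅ ∅ σ t)).trans
      (evalS_iStr ∅ ∅ _ u)))

theorem evalS_std (X Y Z X' Y' Z' : Set ℕ) (σ : ℕ → ℕ) :
    ∀ t : Term, Term.evalS (stdStruc X Y Z) σ t = Term.evalS (stdStruc X' Y' Z') σ t := by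
  intro t
  induction t <;> simp_all [Term.evalS, stdStruc]

theorem SatS_std_transfer (X Y Z X' Y' Z' : Set ℕ) :
    ∀ A : Fml, A.noT → A.noD → A.noTb →
      ∀ σ : ℕ → ℕ, (Fml.SatS (stdStruc X Y Z) σ A ↔ Fml.SatS (stdStruc X' Y' Z') σ A) := by
  intro A
  induction A with
  | eq s t =>
      intro _ _ _ σ
      simp only [Fml.SatS]
      rw [evalS_std X Y Z X' Y' Z' σ s, evalS_std X Y Z X' Y' Z' σ t]
      exact Iff.rfl
  | T t => intro h1 _ _ σ; exact h1.elim
  | D t => intro _ h2 _ σ; exact h2.elim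
  | Tb t => intro _ _ h3 σ; exact h3.elim
  | ct t =>
      intro _ _ _ σ
      simp only [Fml.SatS]
      rw [evalS_std X Y Z X' Y' Z' σ t]; simp [stdStruc]
  | sentT t =>
      intro _ _ _ σ
      simp only [Fml.SatS]
      rw [evalS_std X Y Z X' Y' Z' σ t]; simp [stdStruc]
  | sentD t =>
      intro _ _ _ σ
      simp only [Fml.SatS]
      rw [evalS_std X Y Z X' Y' Z' σ t]; simp [stdStruc]
  | fml1T s t =>
      intro _ _ _ σ
      simp only [Fml.SatS]
      rw [evalS_std X Y Z X' Y' Z' σ s, evalS_std X Y Z X' Y' Z' σ t]; simp [stdStruc]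
  | fml1D s t =>
      intro _ _ _ σ
      simp only [Fml.SatS]
      rw [evalS_std X Y Z X' Y' Z' σ s, evalS_std X Y Z X' Y' Z' σ t]; simp [stdStruc]
  | not A ih => intro h1 h2 h3 σ; exact not_congr (ih h1 h2 h3 σ)
  | and A B ihA ihB =>
      intro h1 h2 h3 σ
      exact and_congr (ihA h1.1 h2.1 h3.1 σ) (ihB h1.2 h2.2 h3.2 σ)
  | all k A ih =>
      intro h1 h2 h3 σ
      exact forall_congr' fun m => ih h1 h2 h3 _

/-! ### The determinateness inductive -/

/-- The problematic indeterminate sentence `T(0)`. -/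
def psi0 : Fml := Fml.T (numeral 0)

/-- Determinately-true / determinately-false sentences of `L_D`. -/
inductive Dtv : Bool → Fml → Prop where
  | deq_t (s t : Term) (hs : s.fv = ∅) (ht : t.fv = ∅)
      (h : s.val0 zf = t.val0 zf) : Dtv true (.eq s t)
  | deq_f (s t : Term) (hs : s.fv = ∅) (ht : t.fv = ∅)
      (h : s.val0 zf ≠ t.val0 zf) : Dtv false (.eq s t)
  | dT (b : Bool) (u : Term) (ψ : Fml) (hu : u.fv = ∅)
      (hc : ψ.code = u.val0 zf) (h : Dtv b ψ) : Dtv b (.T u)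
  | dD (b : Bool) (u : Term) (ψ : Fml) (hu : u.fv = ∅)
      (hc : ψ.code = u.val0 zf) (h : Dtv b ψ) : Dtv true (.D u)
  | dnot_t (A : Fml) (h : Dtv false A) : Dtv true A.not
  | dnot_f (A : Fml) (h : Dtv true A) : Dtv false A.not
  | dand_t (A B : Fml) (hA : Dtv true A) (hB : Dtv true B) : Dtv true (A.and B)
  | dand_f1 (A B : Fml) (hA : Dtv false A) (hB : IsSentD B) : Dtv false (A.and B)
  | dand_f2 (A B : Fml) (hA : IsSentD A) (hB : Dtv false B) : Dtv false (A.and B)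
  | dall_t (k : ℕ) (A : Fml) (hTb : A.noTb) (hfv : A.fv ⊆ {k})
      (h : ∀ t : Term, t.fv = ∅ → Dtv true (A.subst k t)) : Dtv true (.all k A)
  | dall_f (k : ℕ) (A : Fml) (hTb : A.noTb) (hfv : A.fv ⊆ {k}) (t : Term)
      (htc : t.fv = ∅) (h : Dtv false (A.subst k t)) : Dtv false (.all k A)

theorem erase_of_subset_singleton {s : Finset ℕ} {k : ℕ} (h : s ⊆ {k}) :
    s.erase k = ∅ := by
  ext n
  simp only [Finset.mem_erase, Finset.notMem_empty, iff_false, not_and]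
  intro hn hns
  exact hn (by simpa using h hns)

theorem Dtv_isSentD : ∀ (b : Bool) (A : Fml), Dtv b A → IsSentD A := by
  intro b A h
  induction h with
  | deq_t s t hs ht h => exact ⟨trivial, by simp [Fml.fv, hs, ht]⟩
  | deq_f s t hs ht h => exact ⟨trivial, by simp [Fml.fv, hs, ht]⟩
  | dT b u ψ hu hc h ih => exact ⟨trivial, by simp [Fml.fv, hu]⟩
  | dD b u ψ hu hc h ih => exact ⟨trivial, by simp [Fml.fv, hu]⟩
  | dnot_t A h ih => exact ⟨ih.1, by simp [Fml.fv, ih.2]⟩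
  | dnot_f A h ih => exact ⟨ih.1, by simp [Fml.fv, ih.2]⟩
  | dand_t A B hA hB ihA ihB => exact ⟨⟨ihA.1, ihB.1⟩, by simp [Fml.fv, ihA.2, ihB.2]⟩
  | dand_f1 A B hA hB ihA => exact ⟨⟨ihA.1, hB.1⟩, by simp [Fml.fv, ihA.2, hB.2]⟩
  | dand_f2 A B hA hB ihB => exact ⟨⟨hA.1, ihB.1⟩, by simp [Fml.fv, hA.2, ihB.2]⟩
  | dall_t k A hTb hfv h ih => exact ⟨hTb, by simp [Fml.fv, erase_of_subset_singleton hfv]⟩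
  | dall_f k A hTb hfv t htc h ih => exact ⟨hTb, by simp [Fml.fv, erase_of_subset_singleton hfv]⟩

theorem psi0_not_Dtv : ∀ b : Bool, ¬ Dtv b psi0 := by
  intro b h
  cases h with
  | dT b u ψ hu hc h =>
      exact Fml.code_ne_zero ψ (by simpa [numeral, Term.val0] using hc)

/-! ### The model sets and the truth lemma -/

/-- The determinateness set. -/
noncomputable def XDset : Set ℕ := {n | ∃ (b : Bool) (ψ : Fml), ψ.code = n ∧ Dtv b ψ}

/-- The code of the indeterminate sentence. -/
noncomputable def n0 : ℕ := psi0.code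

/-- The inner truth set. -/
noncomputable def YTset : Set ℕ :=
  {n | (∃ ψ : Fml, ψ.code = n ∧ Dtv true ψ) ∨ n = n0}

/-- The inner model. -/
noncomputable def iS : Struc := iStr YTset XDset

/-- Inner satisfaction. -/
noncomputable def SatI (A : Fml) : Prop := Fml.SatS iS zf A

/-- The outer truth set. -/
noncomputable def XTset : Set ℕ := {n | ∃ A : Fml, A.code = n ∧ IsSentD A ∧ SatI A}

theorem mem_XD (A : Fml) : A.code ∈ XDset ↔ ∃ b : Bool, Dtv b A := by
  constructor
  · rintro ⟨b, ψ, hc, h⟩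
    cases Fml.code_inj _ _ hc
    exact ⟨b, h⟩
  · rintro ⟨b, h⟩
    exact ⟨b, A, rfl, h⟩

theorem mem_YT (A : Fml) : A.code ∈ YTset ↔ (Dtv true A ∨ A = psi0) := by
  constructor
  · rintro (⟨ψ, hc, h⟩ | h)
    · cases Fml.code_inj _ _ hc
      exact Or.inl h
    · exact Or.inr (Fml.code_inj _ _ h)
  · rintro (h | h)
    · exact Or.inl ⟨A, rfl, h⟩
    · exact Or.inr (by rw [h]; rfl)

theorem mem_XT (A : Fml) : A.code ∈ XTset ↔ IsSentD A ∧ SatI A := by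
  constructor
  · rintro ⟨B, hc, h1, h2⟩
    cases Fml.code_inj _ _ hc
    exact ⟨h1, h2⟩
  · rintro ⟨h1, h2⟩
    exact ⟨A, rfl, h1, h2⟩

theorem SatI_eq (s t : Term) : SatI (.eq s t) ↔ s.val0 zf = t.val0 zf := by
  simp only [SatI, Fml.SatS, iS]
  rw [evalS_iStr, evalS_iStr]
  exact Iff.rfl

theorem SatI_T (u : Term) : SatI (.T u) ↔ u.val0 zf ∈ YTset := by
  simp only [SatI, Fml.SatS, iS]
  rw [evalS_iStr]
  exact Iff.rfl

theorem SatI_D (u : Term) : SatI (.D u) ↔ u.val0 zf ∈ XDset := by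
  simp only [SatI, Fml.SatS, iS]
  rw [evalS_iStr]
  exact Iff.rfl

theorem SatI_not (A : Fml) : SatI A.not ↔ ¬ SatI A := Iff.rfl

theorem SatI_and (A B : Fml) : SatI (A.and B) ↔ (SatI A ∧ SatI B) := Iff.rfl

theorem SatI_all (k : ℕ) (A : Fml) :
    SatI (.all k A) ↔ ∀ t : Term, t.fv = ∅ → SatI (A.subst k t) := by
  constructor
  · intro h t ht
    have hsub := Fml.SatS_subst iS k t (by simp [ht]) A zf
    rw [SatI, hsub]
    exact h _
  · intro h m
    have hsub := Fml.SatS_subst iS k (numeral m) (by rw [numeral_fv m]; exact Finset.empty_subset _) A zf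
    have := h (numeral m) (numeral_fv m)
    rw [SatI, hsub] at this
    have he : Term.evalS iS zf (numeral m) = m := by
      rw [show Term.evalS iS zf (numeral m) = (numeral m).val0 zf from evalS_iStr _ _ _ _]
      exact numeral_val0 zf m
    rwa [he] at this

/-- The fundamental truth lemma: determinately true sentences are true in the
inner model and not determinately false, and vice versa. -/
theorem Dtv_truth : ∀ (b : Bool) (A : Fml), Dtv b A →
    (SatI A ↔ b = true) ∧ ¬ Dtv (!b) A := by
  intro b A h
  induction h with
  | deq_t s t hs ht h =>
      refine ⟨by simp [SatI_eq, h], fun hf => ?_⟩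
      cases hf with
      | deq_f _ _ _ _ h' => exact h' h
  | deq_f s t hs ht h =>
      refine ⟨by simp [SatI_eq, h], fun hf => ?_⟩
      cases hf with
      | deq_t _ _ _ _ h' => exact h h'
  | dT b u ψ hu hc h ih =>
      constructor
      · rw [SatI_T]
        cases b with
        | true =>
            simp only [iff_true]
            exact Or.inl ⟨ψ, hc, h⟩
        | false =>
            simp only [Bool.false_eq_true, iff_false]
            intro hmem
            rcases hmem with ⟨ψ', hc', h'⟩ | hn
            · cases Fml.code_inj _ _ (hc'.trans hc.symm)
              exact ih.2 h'
            · have hψ : ψ = psi0 := Fml.code_inj _ _ (hc.trans hn)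
              rw [hψ] at h
              exact psi0_not_Dtv _ h
      · intro hf
        cases b <;> simp only [Bool.not_true, Bool.not_false] at hf ih <;>
          (cases hf with
           | dT b' u ψ' hu' hc' h' =>
               cases Fml.code_inj _ _ (hc'.trans hc.symm)
               exact ih.2 h')
  | dD b u ψ hu hc h ih =>
      refine ⟨by rw [SatI_D]; simp only [iff_true]; exact ⟨b, ψ, hc, h⟩, fun hf => ?_⟩
      cases hf
  | dnot_t A h ih =>
      constructor
      · rw [SatI_not]
        simp only [iff_true]
        exact fun hs => (by simpa using ih.1.mp hs)
      · intro hf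
        cases hf with
        | dnot_f _ h' => exact ih.2 h'
  | dnot_f A h ih =>
      constructor
      · rw [SatI_not]
        simp only [Bool.false_eq_true, iff_false, not_not]
        exact ih.1.mpr rfl
      · intro hf
        cases hf with
        | dnot_t _ h' => exact ih.2 h'
  | dand_t A B hA hB ihA ihB =>
      refine ⟨by simp [SatI_and, ihA.1, ihB.1], fun hf => ?_⟩
      cases hf with
      | dand_f1 _ _ h' _ => exact ihA.2 h'
      | dand_f2 _ _ _ h' => exact ihB.2 h'
  | dand_f1 A B hA hB ihA =>
      refine ⟨by simp [SatI_and, ihA.1], fun hf => ?_⟩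
      cases hf with
      | dand_t _ _ h' _ => exact ihA.2 h'
  | dand_f2 A B hA hB ihB =>
      refine ⟨by simp [SatI_and, ihB.1], fun hf => ?_⟩
      cases hf with
      | dand_t _ _ _ h' => exact ihB.2 h'
  | dall_t k A hTb hfv h ih =>
      constructor
      · rw [SatI_all]
        simp only [iff_true]
        intro t ht
        exact ((ih t ht).1).mpr rfl
      · intro hf
        cases hf with
        | dall_f _ _ _ _ t htc h' => exact (ih t htc).2 h'
  | dall_f k A hTb hfv t htc h ih =>
      constructor
      · rw [SatI_all]
        simp only [Bool.false_eq_true, iff_false]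
        intro hall
        exact (by simpa using ih.1 : ¬ SatI (A.subst k t)) (hall t htc)
      · intro hf
        cases hf with
        | dall_t _ _ _ _ h' => exact ih.2 (h' t htc)

theorem Dtv_true_SatI {A : Fml} (h : Dtv true A) : SatI A :=
  (Dtv_truth _ _ h).1.mpr rfl

theorem Dtv_false_SatI {A : Fml} (h : Dtv false A) : ¬ SatI A := by
  have := (Dtv_truth _ _ h).1
  simpa using this

theorem Dtv_not_both {A : Fml} (h : Dtv true A) (h' : Dtv false A) : False :=
  (Dtv_truth _ _ h).2 h'

/-! ### Substitution invariance of determinateness -/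

theorem fv_subst_swap {k : ℕ} {t t' : Term} (ht : t.fv = ∅) (ht' : t'.fv = ∅)
    {u : Term} (h : (Term.subst k t u).fv = ∅) : (Term.subst k t' u).fv = ∅ := by
  rw [Term.fv_subst k t' ht']
  rw [Term.fv_subst k t ht] at h
  exact h

theorem val0_subst_swap {k : ℕ} {t t' : Term} (hval : t.val0 zf = t'.val0 zf)
    (u : Term) : Term.val0 zf (Term.subst k t u) = Term.val0 zf (Term.subst k t' u) := by
  rw [Term.val0_subst, Term.val0_subst, hval]

theorem IsSentD_subst_swap {k : ℕ} {t t' : Term} (ht : t.fv = ∅) (ht' : t'.fv = ∅)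
    {B : Fml} (h : IsSentD (B.subst k t)) : IsSentD (B.subst k t') := by
  refine ⟨(Fml.noTb_subst k t' B).2 ((Fml.noTb_subst k t B).1 h.1), ?_⟩
  have h2 := h.2
  rw [Fml.fv_subst k t ht] at h2
  rw [Fml.fv_subst k t' ht']
  exact h2

theorem Dtv_substInv : ∀ (N : ℕ) (A : Fml), A.fsize ≤ N →
    ∀ (k : ℕ) (t t' : Term), t.fv = ∅ → t'.fv = ∅ → t.val0 zf = t'.val0 zf →
    ∀ b : Bool, Dtv b (A.subst k t) → Dtv b (A.subst k t') := by
  intro N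
  induction N with
  | zero =>
      intro A hA k t t' ht ht' hval b hd
      cases A with
      | eq s u =>
          simp only [Fml.subst] at hd ⊢
          cases hd with
          | deq_t _ _ hs hu h =>
              exact Dtv.deq_t _ _ (fv_subst_swap ht ht' hs) (fv_subst_swap ht ht' hu)
                (by rw [← val0_subst_swap hval s, ← val0_subst_swap hval u]; exact h)
          | deq_f _ _ hs hu h =>
              exact Dtv.deq_f _ _ (fv_subst_swap ht ht' hs) (fv_subst_swap ht ht' hu)
                (by rw [← val0_subst_swap hval s, ← val0_subst_swap hval u]; exact h)
      | T u =>
          simp only [Fml.subst] at hd ⊢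
          cases hd
          rename_i ψ hdtv hfv hcode
          exact Dtv.dT _ _ ψ (fv_subst_swap ht ht' hfv)
            (by rw [← val0_subst_swap hval u]; exact hcode) hdtv
      | D u =>
          simp only [Fml.subst] at hd ⊢
          cases hd with
          | dD b' _ ψ hu hc h =>
              exact Dtv.dD b' _ ψ (fv_subst_swap ht ht' hu)
                (by rw [← val0_subst_swap hval u]; exact hc) h
      | Tb u => simp only [Fml.subst] at hd; cases hd
      | ct u => simp only [Fml.subst] at hd; cases hd
      | sentT u => simp only [Fml.subst] at hd; cases hd
      | sentD u => simp only [Fml.subst] at hd; cases hd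
      | fml1T s u => simp only [Fml.subst] at hd; cases hd
      | fml1D s u => simp only [Fml.subst] at hd; cases hd
      | not A => exact absurd hA (by simp [Fml.fsize])
      | and A B => exact absurd hA (by simp [Fml.fsize])
      | all j A => exact absurd hA (by simp [Fml.fsize])
  | succ N ihN =>
      intro A hA k t t' ht ht' hval b hd
      cases A with
      | eq s u =>
          simp only [Fml.subst] at hd ⊢
          cases hd with
          | deq_t _ _ hs hu h =>
              exact Dtv.deq_t _ _ (fv_subst_swap ht ht' hs) (fv_subst_swap ht ht' hu)
                (by rw [← val0_subst_swap hval s, ← val0_subst_swap hval u]; exact h)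
          | deq_f _ _ hs hu h =>
              exact Dtv.deq_f _ _ (fv_subst_swap ht ht' hs) (fv_subst_swap ht ht' hu)
                (by rw [← val0_subst_swap hval s, ← val0_subst_swap hval u]; exact h)
      | T u =>
          simp only [Fml.subst] at hd ⊢
          cases hd
          rename_i ψ hdtv hfv hcode
          exact Dtv.dT _ _ ψ (fv_subst_swap ht ht' hfv)
            (by rw [← val0_subst_swap hval u]; exact hcode) hdtv
      | D u =>
          simp only [Fml.subst] at hd ⊢
          cases hd with
          | dD b' _ ψ hu hc h =>
              exact Dtv.dD b' _ ψ (fv_subst_swap ht ht' hu)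
                (by rw [← val0_subst_swap hval u]; exact hc) h
      | Tb u => simp only [Fml.subst] at hd; cases hd
      | ct u => simp only [Fml.subst] at hd; cases hd
      | sentT u => simp only [Fml.subst] at hd; cases hd
      | sentD u => simp only [Fml.subst] at hd; cases hd
      | fml1T s u => simp only [Fml.subst] at hd; cases hd
      | fml1D s u => simp only [Fml.subst] at hd; cases hd
      | not A =>
          have hA' : A.fsize ≤ N := by simp [Fml.fsize] at hA; omega
          simp only [Fml.subst] at hd ⊢
          cases hd with
          | dnot_t _ h => exact Dtv.dnot_t _ (ihN A hA' k t t' ht ht' hval false h)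
          | dnot_f _ h => exact Dtv.dnot_f _ (ihN A hA' k t t' ht ht' hval true h)
      | and A B =>
          have hA' : A.fsize ≤ N := by simp [Fml.fsize] at hA; omega
          have hB' : B.fsize ≤ N := by simp [Fml.fsize] at hA; omega
          simp only [Fml.subst] at hd ⊢
          cases hd with
          | dand_t _ _ h1 h2 =>
              exact Dtv.dand_t _ _ (ihN A hA' k t t' ht ht' hval true h1)
                (ihN B hB' k t t' ht ht' hval true h2)
          | dand_f1 _ _ h1 h2 =>
              exact Dtv.dand_f1 _ _ (ihN A hA' k t t' ht ht' hval false h1)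
                (IsSentD_subst_swap ht ht' h2)
          | dand_f2 _ _ h1 h2 =>
              exact Dtv.dand_f2 _ _ (IsSentD_subst_swap ht ht' h1)
                (ihN B hB' k t t' ht ht' hval false h2)
      | all j A =>
          have hA' : A.fsize ≤ N := by simp [Fml.fsize] at hA; omega
          by_cases hjk : j = k
          · subst hjk
            simp only [Fml.subst, if_pos rfl] at hd ⊢
            exact hd
          · simp only [Fml.subst, if_neg hjk] at hd ⊢
            cases hd with
            | dall_t _ _ hTb hfv h =>
                refine Dtv.dall_t j _ ((Fml.noTb_subst k t' A).2 ((Fml.noTb_subst k t A).1 hTb))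
                  (by rw [Fml.fv_subst k t' ht']; rw [Fml.fv_subst k t ht] at hfv; exact hfv)
                  (fun u hu => ?_)
                have hsz : (A.subst j u).fsize ≤ N := by rw [Fml.fsize_subst]; exact hA'
                have h1 := h u hu
                rw [Fml.subst_comm j k hjk t u ht hu] at h1
                have h2 := ihN (A.subst j u) hsz k t t' ht ht' hval true h1
                rw [← Fml.subst_comm j k hjk t' u ht' hu] at h2
                exact h2
            | dall_f _ _ hTb hfv u hu h =>
                refine Dtv.dall_f j _ ((Fml.noTb_subst k t' A).2 ((Fml.noTb_subst k t A).1 hTb))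
                  (by rw [Fml.fv_subst k t' ht']; rw [Fml.fv_subst k t ht] at hfv; exact hfv)
                  u hu ?_
                have hsz : (A.subst j u).fsize ≤ N := by rw [Fml.fsize_subst]; exact hA'
                have h1 := h
                rw [Fml.subst_comm j k hjk t u ht hu] at h1
                have h2 := ihN (A.subst j u) hsz k t t' ht ht' hval false h1
                rw [← Fml.subst_comm j k hjk t' u ht' hu] at h2
                exact h2

theorem Dtv_subst_swap {k : ℕ} {t t' : Term} (ht : t.fv = ∅) (ht' : t'.fv = ∅)
    (hval : t.val0 zf = t'.val0 zf) {A : Fml} {b : Bool}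
    (h : Dtv b (A.subst k t)) : Dtv b (A.subst k t') :=
  Dtv_substInv A.fsize A le_rfl k t t' ht ht' hval b h

/-! ### The outer model and logical helpers -/

/-- The outer model. -/
noncomputable def oS : Struc := stdStruc XTset XDset ∅

theorem SatS_imp {S : Struc} {σ : ℕ → S.M} {A B : Fml} :
    Fml.SatS S σ (A.imp B) ↔ (Fml.SatS S σ A → Fml.SatS S σ B) := by
  simp only [Fml.imp, Fml.SatS]
  tauto

theorem SatS_or {S : Struc} {σ : ℕ → S.M} {A B : Fml} :
    Fml.SatS S σ (A.or B) ↔ (Fml.SatS S σ A ∨ Fml.SatS S σ B) := by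
  simp only [Fml.or, Fml.SatS]
  tauto

theorem SatS_iff {S : Struc} {σ : ℕ → S.M} {A B : Fml} :
    Fml.SatS S σ (A.iff B) ↔ (Fml.SatS S σ A ↔ Fml.SatS S σ B) := by
  simp only [Fml.iff, Fml.SatS, SatS_imp]
  tauto

theorem SatS_ex {S : Struc} {σ : ℕ → S.M} {k : ℕ} {A : Fml} :
    Fml.SatS S σ (Fml.ex k A) ↔ ∃ m : S.M, Fml.SatS S (Function.update σ k m) A := by
  simp only [Fml.ex, Fml.SatS, not_forall, not_not]

theorem mem_XT' {A : Fml} (h : IsSentD A) : A.code ∈ XTset ↔ SatI A := by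
  rw [mem_XT]
  simp [h]

theorem YT_XT_on_XD {m : ℕ} (hm : m ∈ XDset) : m ∈ YTset ↔ m ∈ XTset := by
  obtain ⟨b, ψ, rfl, hd⟩ := hm
  rw [mem_YT, mem_XT]
  constructor
  · rintro (h | h)
    · exact ⟨Dtv_isSentD _ _ hd, Dtv_true_SatI h⟩
    · exact absurd (h ▸ hd) (psi0_not_Dtv b)
  · rintro ⟨_, hs⟩
    cases b with
    | true => exact Or.inl hd
    | false => exact absurd hs (Dtv_false_SatI hd)

theorem IsSentD_subst {A : Fml} {k : ℕ} (hTb : A.noTb) (hfv : A.fv ⊆ {k})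
    {t : Term} (ht : t.fv = ∅) : IsSentD (A.subst k t) := by
  refine ⟨(Fml.noTb_subst k t A).2 hTb, ?_⟩
  rw [Fml.fv_subst k t ht]
  exact erase_of_subset_singleton hfv

theorem SatI_subst {A : Fml} {k : ℕ} {t : Term} (ht : t.fv = ∅) :
    SatI (A.subst k t) ↔ Fml.SatS iS (Function.update zf k (t.val0 zf)) A := by
  have h := Fml.SatS_subst iS k t (by simp [ht]) A zf
  rw [SatI, h, show Term.evalS iS zf t = t.val0 zf from evalS_iStr _ _ _ t]

/-! ### Satisfaction of the base theory and induction in the outer model -/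

theorem BaseTh_oS : ∀ A ∈ BaseTh, ∀ τ : ℕ → ℕ, Fml.SatS oS τ A := by
  rintro A ⟨h1, h2, h3, hfv, htrue⟩ τ
  exact (SatS_std_transfer XTset XDset ∅ ∅ ∅ ∅ A h1 h2 h3 τ).mpr
    ((Fml.SatS_agree (stdStruc ∅ ∅ ∅) A τ zf
      (by rw [hfv]; intro n hn; cases hn)).mpr htrue)

theorem SatS_close {S : Struc} {B : Fml} (h : ∀ τ : ℕ → S.M, Fml.SatS S τ B) :
    ∀ τ : ℕ → S.M, Fml.SatS S τ B.close := by
  rw [Fml.close]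
  generalize (B.fv.sort (· ≤ ·)) = l
  induction l with
  | nil => exact h
  | cons k l ih =>
      intro τ
      simp only [List.foldr_cons, Fml.SatS]
      intro m
      exact ih _

theorem IndTh_oS : ∀ A ∈ IndTh, ∀ τ : ℕ → ℕ, Fml.SatS oS τ A := by
  rintro B ⟨k, A, rfl⟩
  unfold indAx
  apply SatS_close (S := oS)
  intro τ
  rw [SatS_imp]
  rintro ⟨h0, hs⟩
  intro m
  induction m with
  | zero =>
      have hsub := Fml.SatS_subst oS k Term.zero (by simp [Term.fv]) A τ
      rw [hsub] at h0
      exact h0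
  | succ m ih =>
      have hstep := hs m
      rw [SatS_imp] at hstep
      have h1 := hstep ih
      have hsub := Fml.SatS_subst oS k (Term.succ (Term.var k))
        (by simp [Term.fv]) A (Function.update τ k m)
      rw [hsub] at h1
      have he : Term.evalS oS (Function.update τ k m) (Term.succ (Term.var k))
          = m + 1 := by
        simp [Term.evalS, oS, stdStruc]
        exact Function.update_self ..
      rw [he] at h1
      have e : Function.update (Function.update τ k m) k (m + 1) = Function.update τ k (m + 1) :=
        Function.update_idem ..
      rw [e] at h1
      exact h1

/-! ### Update-evaluation helpers -/

theorem upd10 (f : ℕ → ℕ) (v : ℕ) : Function.update f 1 v 0 = f 0 :=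
  Function.update_of_ne (by omega) _ _
theorem upd20 (f : ℕ → ℕ) (v : ℕ) : Function.update f 2 v 0 = f 0 :=
  Function.update_of_ne (by omega) _ _
theorem upd21 (f : ℕ → ℕ) (v : ℕ) : Function.update f 2 v 1 = f 1 :=
  Function.update_of_ne (by omega) _ _
theorem upd30 (f : ℕ → ℕ) (v : ℕ) : Function.update f 3 v 0 = f 0 :=
  Function.update_of_ne (by omega) _ _
theorem upd31 (f : ℕ → ℕ) (v : ℕ) : Function.update f 3 v 1 = f 1 :=
  Function.update_of_ne (by omega) _ _
theorem upd32 (f : ℕ → ℕ) (v : ℕ) : Function.update f 3 v 2 = f 2 :=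
  Function.update_of_ne (by omega) _ _

/-! ### The `T`-axioms in the outer model -/

theorem axT1_oS : ∀ τ : ℕ → ℕ, Fml.SatS oS τ axT1 := by
  intro τ
  simp only [axT1, Fml.SatS, Fml.imp, Fml.iff, Fml.or, Term.evalS, v0, v1, oS, stdStruc,
    Function.update_self, upd10, isCT]
  push_neg
  rintro a b ⟨⟨u, rfl, hu⟩, ⟨w, rfl, hw⟩⟩
  have key : (Fml.eq u w).code ∈ XTset ↔ u.val0 zf = w.val0 zf := by
    rw [mem_XT' (A := Fml.eq u w) ⟨by simp [Fml.noTb], by simp [Fml.fv, hu, hw]⟩, SatI_eq]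
  rw [opFeq_code, opEval_code, opEval_code]
  exact ⟨key.1, key.2⟩

theorem axT2p_oS : ∀ τ : ℕ → ℕ, Fml.SatS oS τ (axT2p Fml.D dcodePrim) := by
  intro τ
  simp only [axT2p, dcodePrim, Fml.SatS, Fml.imp, Fml.iff, Fml.or, Term.evalS, v0, oS, stdStruc,
    Function.update_self, isCT]
  push_neg
  rintro a ⟨u, rfl, hu⟩
  have key : (Fml.D u).code ∈ XTset ↔ u.val0 zf ∈ XDset := by
    rw [mem_XT' (A := Fml.D u) ⟨by simp [Fml.noTb], by simp [Fml.fv, hu]⟩, SatI_D]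
  rw [opEval_code, opFD_code]
  exact ⟨key.2, key.1⟩

theorem axT3_oS : ∀ τ : ℕ → ℕ, Fml.SatS oS τ (axT3 Fml.D) := by
  intro τ
  simp only [axT3, tTT, tmT, Fml.SatS, Fml.imp, Fml.iff, Fml.or, Term.evalS, v0, oS, stdStruc,
    Function.update_self, isCT]
  push_neg
  rintro a ⟨u, rfl, hu⟩ hd
  rw [opEval_code] at hd
  have key : (Fml.T u).code ∈ XTset ↔ u.val0 zf ∈ XTset := by
    rw [mem_XT' (A := Fml.T u) ⟨by simp [Fml.noTb], by simp [Fml.fv, hu]⟩, SatI_T]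
    exact YT_XT_on_XD hd
  rw [opFT_code, opEval_code]
  exact ⟨key.1, key.2⟩

theorem axT4_oS : ∀ τ : ℕ → ℕ, Fml.SatS oS τ (axT4 Fml.sentD) := by
  intro τ
  simp only [axT4, Fml.SatS, Fml.imp, Fml.iff, Fml.or, Term.evalS, v0, oS, stdStruc,
    Function.update_self, isSentDC]
  push_neg
  rintro a ⟨A, rfl, hA⟩
  have key : A.not.code ∈ XTset ↔ ¬ (A.code ∈ XTset) := by
    rw [mem_XT' (A := A.not) ⟨hA.1, by simp [Fml.fv, hA.2]⟩, mem_XT' (A := A) hA, SatI_not]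
  rw [opFneg_code]
  exact ⟨key.1, key.2⟩

theorem axT5_oS : ∀ τ : ℕ → ℕ, Fml.SatS oS τ (axT5 Fml.sentD) := by
  intro τ
  simp only [axT5, Fml.SatS, Fml.imp, Fml.iff, Fml.or, Term.evalS, v0, v1, oS, stdStruc,
    Function.update_self, upd10, isSentDC]
  push_neg
  rintro a b ⟨⟨A, rfl, hA⟩, ⟨B, rfl, hB⟩⟩
  have key : (A.and B).code ∈ XTset ↔ (A.code ∈ XTset ∧ B.code ∈ XTset) := by
    rw [mem_XT' (A := A.and B) ⟨⟨hA.1, hB.1⟩, by simp [Fml.fv, hA.2, hB.2]⟩,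
      mem_XT' (A := A) hA, mem_XT' (A := B) hB, SatI_and]
  rw [opFand_code]
  exact ⟨key.1, key.2⟩

theorem axT6_oS : ∀ τ : ℕ → ℕ, Fml.SatS oS τ (axT6 Fml.fml1D) := by
  intro τ
  simp only [axT6, Fml.SatS, Fml.imp, Fml.iff, Fml.or, Term.evalS, v0, v1, v2, oS, stdStruc,
    Function.update_self, upd10, upd20, upd21, isFml1DC, isCT]
  push_neg
  rintro k a ⟨A, rfl, hTb, hfv⟩
  have key : (Fml.all k A).code ∈ XTset ↔
      ∀ u : Term, u.fv = ∅ → (A.subst k u).code ∈ XTset := by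
    rw [mem_XT' (A := Fml.all k A) ⟨hTb, by simp only [Fml.fv]; exact erase_of_subset_singleton hfv⟩, SatI_all]
    constructor
    · intro h u hu
      rw [mem_XT' (A := A.subst k u) (IsSentD_subst hTb hfv hu)]
      exact h u hu
    · intro h u hu
      have := h u hu
      rw [mem_XT' (A := A.subst k u) (IsSentD_subst hTb hfv hu)] at this
      exact this
  constructor
  · intro h c hc
    obtain ⟨u, rfl, hu⟩ := hc
    rw [opFsub_code]
    rw [opFall_code] at h
    exact (key.1 h) u hu
  · intro h
    rw [opFall_code]
    refine key.2 fun u hu => ?_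
    have := h u.code ⟨u, rfl, hu⟩
    rw [opFsub_code] at this
    exact this

/-! ### Determinateness-axiom helpers -/

theorem mem_XDset_iff (n : ℕ) : n ∈ XDset ↔ ∃ (b : Bool) (ψ : Fml), ψ.code = n ∧ Dtv b ψ :=
  Iff.rfl

theorem Dtv_T_inv {b : Bool} {u : Term} (h : Dtv b (.T u)) :
    u.fv = ∅ ∧ ∃ ψ : Fml, ψ.code = u.val0 zf ∧ Dtv b ψ := by
  cases h
  rename_i ψ hdtv hfv hcode
  exact ⟨hfv, ψ, hcode, hdtv⟩

theorem Dtv_D_inv {b : Bool} {u : Term} (h : Dtv b (.D u)) :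
    u.fv = ∅ ∧ ∃ (b' : Bool) (ψ : Fml), ψ.code = u.val0 zf ∧ Dtv b' ψ := by
  cases h
  rename_i b' ψ hdtv hfv hcode
  exact ⟨hfv, b', ψ, hcode, hdtv⟩

theorem Dtv_not_inv {b : Bool} {A : Fml} (h : Dtv b A.not) :
    (b = true ∧ Dtv false A) ∨ (b = false ∧ Dtv true A) := by
  cases h with
  | dnot_t _ h' => exact Or.inl ⟨rfl, h'⟩
  | dnot_f _ h' => exact Or.inr ⟨rfl, h'⟩

/-! ### The simple `D`-axioms -/

theorem axD1_oS : ∀ τ : ℕ → ℕ, Fml.SatS oS τ (axD1 Fml.D) := by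
  intro τ
  simp only [axD1, Fml.SatS, Fml.imp, Fml.iff, Fml.or, Term.evalS, v0, v1, oS, stdStruc,
    Function.update_self, upd10, isCT]
  push_neg
  rintro a b ⟨⟨u, rfl, hu⟩, ⟨w, rfl, hw⟩⟩
  rw [opFeq_code, mem_XD]
  by_cases h : u.val0 zf = w.val0 zf
  · exact ⟨true, Dtv.deq_t u w hu hw h⟩
  · exact ⟨false, Dtv.deq_f u w hu hw h⟩

theorem axD2_oS : ∀ τ : ℕ → ℕ, Fml.SatS oS τ (axD2 Fml.D) := by
  intro τ
  simp only [axD2, tmT, Fml.SatS, Fml.imp, Fml.iff, Fml.or, Term.evalS, v0, oS, stdStruc,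
    Function.update_self, isCT]
  push_neg
  rintro a ⟨u, rfl, hu⟩
  rw [opFT_code, opEval_code]
  have key : (Fml.T u).code ∈ XDset ↔ u.val0 zf ∈ XDset := by
    rw [mem_XD, mem_XDset_iff]
    constructor
    · rintro ⟨b, hd⟩
      obtain ⟨_, ψ, hc, hdψ⟩ := Dtv_T_inv hd
      exact ⟨b, ψ, hc, hdψ⟩
    · rintro ⟨b, ψ, hc, hdψ⟩
      exact ⟨b, Dtv.dT b u ψ hu hc hdψ⟩
  exact ⟨key.1, key.2⟩

theorem axD3_oS : ∀ τ : ℕ → ℕ, Fml.SatS oS τ (axD3 Fml.D dcodePrim) := by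
  intro τ
  simp only [axD3, dcodePrim, Fml.SatS, Fml.imp, Fml.iff, Fml.or, Term.evalS, v0, oS, stdStruc,
    Function.update_self, isCT]
  push_neg
  rintro a ⟨u, rfl, hu⟩
  rw [opFD_code, opEval_code]
  have key : (Fml.D u).code ∈ XDset ↔ u.val0 zf ∈ XDset := by
    rw [mem_XD, mem_XDset_iff]
    constructor
    · rintro ⟨b, hd⟩
      obtain ⟨_, b', ψ, hc, hdψ⟩ := Dtv_D_inv hd
      exact ⟨b', ψ, hc, hdψ⟩
    · rintro ⟨b, ψ, hc, hdψ⟩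
      exact ⟨true, Dtv.dD b u ψ hu hc hdψ⟩
  exact ⟨key.1, key.2⟩

theorem axD4_oS : ∀ τ : ℕ → ℕ, Fml.SatS oS τ (axD4 Fml.D Fml.sentD) := by
  intro τ
  simp only [axD4, Fml.SatS, Fml.imp, Fml.iff, Fml.or, Term.evalS, v0, oS, stdStruc,
    Function.update_self, isSentDC]
  push_neg
  rintro a ⟨A, rfl, hA⟩
  rw [opFneg_code]
  have key : A.not.code ∈ XDset ↔ A.code ∈ XDset := by
    rw [mem_XD, mem_XD]
    constructor
    · rintro ⟨b, hd⟩
      rcases Dtv_not_inv hd with ⟨_, h⟩ | ⟨_, h⟩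
      · exact ⟨false, h⟩
      · exact ⟨true, h⟩
    · rintro ⟨b, hd⟩
      cases b with
      | true => exact ⟨false, Dtv.dnot_f A hd⟩
      | false => exact ⟨true, Dtv.dnot_t A hd⟩
  exact ⟨key.1, key.2⟩

theorem axD5_oS : ∀ τ : ℕ → ℕ, Fml.SatS oS τ (axD5 Fml.D Fml.sentD) := by
  intro τ
  simp only [axD5, Fml.SatS, Fml.imp, Fml.iff, Fml.or, Term.evalS, v0, v1, oS, stdStruc,
    Function.update_self, upd10, isSentDC]
  push_neg
  rintro a b ⟨⟨A, rfl, hA⟩, ⟨B, rfl, hB⟩⟩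
  rw [opFand_code, opFneg_code, opFneg_code]
  have hnotA : A.not.code ∈ XTset ↔ ¬ SatI A := by
    rw [mem_XT' (A := A.not) ⟨hA.1, by simp [Fml.fv, hA.2]⟩]
    exact SatI_not A
  have hnotB : B.not.code ∈ XTset ↔ ¬ SatI B := by
    rw [mem_XT' (A := B.not) ⟨hB.1, by simp [Fml.fv, hB.2]⟩]
    exact SatI_not B
  have key : (A.and B).code ∈ XDset ↔
      ((A.code ∈ XDset ∧ B.code ∈ XDset) ∨ (A.code ∈ XDset ∧ ¬ SatI A) ∨
        (B.code ∈ XDset ∧ ¬ SatI B)) := by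
    rw [mem_XD]
    constructor
    · rintro ⟨bb, hd⟩
      cases hd with
      | dand_t _ _ h1 h2 =>
          exact Or.inl ⟨(mem_XD A).2 ⟨_, h1⟩, (mem_XD B).2 ⟨_, h2⟩⟩
      | dand_f1 _ _ h1 h2 =>
          exact Or.inr (Or.inl ⟨(mem_XD A).2 ⟨_, h1⟩, Dtv_false_SatI h1⟩)
      | dand_f2 _ _ h1 h2 =>
          exact Or.inr (Or.inr ⟨(mem_XD B).2 ⟨_, h2⟩, Dtv_false_SatI h2⟩)
    · rintro (⟨h1, h2⟩ | ⟨h1, h2⟩ | ⟨h1, h2⟩)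
      · obtain ⟨b1, hd1⟩ := (mem_XD A).1 h1
        obtain ⟨b2, hd2⟩ := (mem_XD B).1 h2
        cases b1 with
        | false => exact ⟨false, Dtv.dand_f1 A B hd1 hB⟩
        | true =>
            cases b2 with
            | false => exact ⟨false, Dtv.dand_f2 A B hA hd2⟩
            | true => exact ⟨true, Dtv.dand_t A B hd1 hd2⟩
      · obtain ⟨b1, hd1⟩ := (mem_XD A).1 h1
        cases b1 with
        | true => exact absurd (Dtv_true_SatI hd1) h2
        | false => exact ⟨false, Dtv.dand_f1 A B hd1 hB⟩
      · obtain ⟨b1, hd1⟩ := (mem_XD B).1 h1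
        cases b1 with
        | true => exact absurd (Dtv_true_SatI hd1) h2
        | false => exact ⟨false, Dtv.dand_f2 A B hA hd1⟩
  refine ⟨fun h hcond => ?_, fun himp => ?_⟩
  · rcases key.1 h with ⟨h1, h2⟩ | ⟨h1, h2⟩ | ⟨h1, h2⟩
    · exact absurd h2 (hcond.1 h1)
    · exact absurd (hnotA.2 h2) (hcond.2 h1)
    · exact ⟨h1, hnotB.2 h2⟩
  · apply key.2
    by_cases hA' : A.code ∈ XDset
    · by_cases hB' : B.code ∈ XDset
      · exact Or.inl ⟨hA', hB'⟩
      · by_cases hsA : SatI A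
        · have := himp ⟨fun _ => hB', fun _ => by rw [hnotA]; exact not_not_intro hsA⟩
          exact absurd this.1 hB'
        · exact Or.inr (Or.inl ⟨hA', hsA⟩)
    · have := himp ⟨fun h => absurd h hA', fun h => absurd h hA'⟩
      exact Or.inr (Or.inr ⟨this.1, hnotB.1 this.2⟩)

theorem axD6_oS : ∀ τ : ℕ → ℕ, Fml.SatS oS τ (axD6 Fml.D Fml.fml1D) := by
  intro τ
  simp only [axD6, Fml.SatS, Fml.imp, Fml.iff, Fml.or, Term.evalS, v0, v1, v2, oS, stdStruc,
    Function.update_self, upd10, upd20, upd21, isFml1DC, isCT, Fml.ex]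
  push_neg
  rintro k a ⟨A, rfl, hTb, hfv⟩
  rw [opFall_code]
  have key : (Fml.all k A).code ∈ XDset ↔
      ((∀ u : Term, u.fv = ∅ → (A.subst k u).code ∈ XDset) ∨
       (∃ u : Term, u.fv = ∅ ∧ (A.subst k u).code ∈ XDset ∧ ¬ SatI (A.subst k u))) := by
    rw [mem_XD]
    constructor
    · rintro ⟨bb, hd⟩
      cases hd with
      | dall_t _ _ _ _ h => exact Or.inl fun u hu => (mem_XD _).2 ⟨true, h u hu⟩
      | dall_f _ _ _ _ t htc h =>
          exact Or.inr ⟨t, htc, (mem_XD _).2 ⟨false, h⟩, Dtv_false_SatI h⟩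
    · rintro (h | ⟨u, hu, h1, hns⟩)
      · by_cases hex : ∃ u : Term, u.fv = ∅ ∧ Dtv false (A.subst k u)
        · obtain ⟨u, hu, hd⟩ := hex
          exact ⟨false, Dtv.dall_f k A hTb hfv u hu hd⟩
        · push_neg at hex
          refine ⟨true, Dtv.dall_t k A hTb hfv fun u hu => ?_⟩
          obtain ⟨b1, hd1⟩ := (mem_XD _).1 (h u hu)
          cases b1 with
          | true => exact hd1
          | false => exact absurd hd1 (hex u hu)
      · obtain ⟨b1, hd1⟩ := (mem_XD _).1 h1
        cases b1 with
        | true => exact absurd (Dtv_true_SatI hd1) hns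
        | false => exact ⟨false, Dtv.dall_f k A hTb hfv u hu hd1⟩
  refine ⟨fun h hex => ?_, fun himp => ?_⟩
  · rcases key.1 h with hall | ⟨u, hu, h1, h2⟩
    · obtain ⟨c, ⟨u, rfl, hu⟩, hnot⟩ := hex
      rw [opFsub_code] at hnot
      exact absurd (hall u hu) hnot
    · refine ⟨u.code, ⟨u, rfl, hu⟩, ?_, ?_⟩
      · rw [opFsub_code]; exact h1
      · rw [opFsub_code, opFneg_code,
          mem_XT' (A := (A.subst k u).not)
            ⟨(IsSentD_subst hTb hfv hu).1, by simp [Fml.fv, (IsSentD_subst hTb hfv hu).2]⟩]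
        exact h2
  · apply key.2
    by_cases hall : ∀ u : Term, u.fv = ∅ → (A.subst k u).code ∈ XDset
    · exact Or.inl hall
    · push_neg at hall
      obtain ⟨u, hu, hnd⟩ := hall
      have hstep := himp ⟨u.code, ⟨u, rfl, hu⟩, by rw [opFsub_code]; exact hnd⟩
      obtain ⟨c, ⟨w, rfl, hw⟩, hc1, hc2⟩ := hstep
      rw [opFsub_code] at hc1
      rw [opFsub_code, opFneg_code,
        mem_XT' (A := (A.subst k w).not)
          ⟨(IsSentD_subst hTb hfv hw).1, by simp [Fml.fv, (IsSentD_subst hTb hfv hw).2]⟩] at hc2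
      exact Or.inr ⟨w, hw, hc1, hc2⟩

theorem axR1_oS : ∀ τ : ℕ → ℕ, Fml.SatS oS τ (axR1 Fml.fml1D) := by
  intro τ
  simp only [axR1, Fml.SatS, Fml.imp, Fml.iff, Fml.or, Term.evalS, v0, v1, v2, v3, oS, stdStruc,
    Function.update_self, upd10, upd20, upd21, upd30, upd31, upd32, isFml1DC, isCT]
  push_neg
  rintro k a c d ⟨⟨A, rfl, hTb, hfv⟩, ⟨u, rfl, hu⟩, ⟨w, rfl, hw⟩⟩ hval
  rw [opEval_code, opEval_code] at hval
  rw [opFsub_code, opFsub_code]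
  have e : ∀ t : Term, t.fv = ∅ →
      ((A.subst k t).code ∈ XTset ↔ Fml.SatS iS (Function.update zf k (t.val0 zf)) A) :=
    fun t htc => by rw [mem_XT' (A := A.subst k t) (IsSentD_subst hTb hfv htc), SatI_subst htc]
  rw [e u hu, e w hw, hval]
  exact ⟨id, id⟩

theorem axR2_oS : ∀ τ : ℕ → ℕ, Fml.SatS oS τ (axR2 Fml.D Fml.fml1D) := by
  intro τ
  simp only [axR2, Fml.SatS, Fml.imp, Fml.iff, Fml.or, Term.evalS, v0, v1, v2, v3, oS, stdStruc,
    Function.update_self, upd10, upd20, upd21, upd30, upd31, upd32, isFml1DC, isCT]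
  push_neg
  rintro k a c d ⟨⟨A, rfl, hTb, hfv⟩, ⟨u, rfl, hu⟩, ⟨w, rfl, hw⟩⟩ hval
  rw [opEval_code, opEval_code] at hval
  rw [opFsub_code, opFsub_code]
  constructor
  · intro h
    obtain ⟨b, hd⟩ := (mem_XD _).1 h
    exact (mem_XD _).2 ⟨b, Dtv_subst_swap hu hw hval hd⟩
  · intro h
    obtain ⟨b, hd⟩ := (mem_XD _).1 h
    exact (mem_XD _).2 ⟨b, Dtv_subst_swap hw hu hval.symm hd⟩

/-! ### All of `CD⁺` holds in the outer model -/

theorem CDplus_oS : ∀ B ∈ CDplus, ∀ τ : ℕ → ℕ, Fml.SatS oS τ B := by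
  intro B hB
  simp only [CDplus, CDAx, Set.mem_union, Set.mem_insert_iff,
    Set.mem_singleton_iff] at hB
  rcases hB with ((hB | hB) | hB)
  · exact BaseTh_oS B hB
  · exact IndTh_oS B hB
  · rcases hB with rfl|rfl|rfl|rfl|rfl|rfl|rfl|rfl|rfl|rfl|rfl|rfl|rfl|rfl
    exacts [axT1_oS, axT2p_oS, axT3_oS, axT4_oS, axT5_oS, axT6_oS, axD1_oS,
      axD2_oS, axD3_oS, axD4_oS, axD5_oS, axD6_oS, axR1_oS, axR2_oS]

/-- `CD⁺` does not prove `(∀φ ∈ Sent(L_D))(TTφ ∨ TFφ → Dφ)`,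
i.e. the converse of the `CD⁺`-provable implication `Dφ → TTφ ∨ TFφ` is
unprovable in `CD⁺`. -/
theorem cdplus_not_prove_converse_determinateness :
    ¬ Proves CDplus (Fml.all 0 ((Fml.sentD v0).imp
      (((sTT v0).or (sTF v0)).imp (Fml.D v0)))) := by
  intro hP
  have hsat := hP oS zf CDplus_oS
  have h1' : ∀ m : ℕ, (∃ A : Fml, A.code = m ∧ IsSentD A) →
      (opFT (opNum m) ∉ XTset → opFT (opTneg (opNum m)) ∈ XTset) → m ∈ XDset := by
    intro m
    have h1 := hsat m
    simp only [Fml.SatS, Fml.imp, Fml.iff, Fml.or, Term.evalS, v0, oS, stdStruc, Function.update_self,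
      sTT, sTF, tmT, tmF, isSentDC] at h1
    push_neg at h1
    exact h1
  have h1 := h1' n0
  have hsent : ∃ A : Fml, A.code = n0 ∧ IsSentD A :=
    ⟨psi0, rfl, ⟨by simp [psi0, Fml.noTb], by simp [psi0, Fml.fv, numeral_fv]⟩⟩
  have hTT : opFT (opNum n0) ∈ XTset := by
    rw [opNum_code, opFT_code,
      mem_XT' (A := Fml.T (numeral n0)) ⟨by simp [Fml.noTb], by simp [Fml.fv, numeral_fv]⟩,
      SatI_T, numeral_val0]
    exact Or.inr rfl
  have hD := h1 hsent (fun hn => absurd hTT hn)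
  obtain ⟨b, ψ, hc, hd⟩ := hD
  exact psi0_not_Dtv b (by rwa [Fml.code_inj ψ psi0 hc] at hd)

end CDT
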